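/- arXiv:math/0306369 — 3 statements merged into one kernel-verified Lean document; each statement's English description precedes it below -/
import Mathlib

section
/- Let H be a finite affine hyperplane arrangement in ℝ^m. Then the bounded complex of H (the union of the bounded faces of the polyhedral subdivision of ℝ^m induced by H), if non-empty, is contractible. -/
open scoped RealInnerProductSpace

/-- The (relatively open) face of the affine hyperplane arrangement
`H = {x | ⟪a i, x⟫ = b i}` in `ℝ^m` with sign vector `σ`: the set of points lying on
hyperplane `i` if `σ i = 0`, and strictly on the `σ i` side of it otherwise. -/
def arrFace {ι : Type*} {m : ℕ} (a : ι → EuclideanSpace ℝ (Fin m)) (b : ι → ℝ)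
    (σ : ι → SignType) : Set (EuclideanSpace ℝ (Fin m)) :=
  {x | ∀ i, SignType.sign (⟪a i, x⟫ - b i) = σ i}

/-- The bounded complex of the arrangement: the union of the bounded faces, i.e. the set of
points whose own face is a bounded set. -/
def boundedComplex {ι : Type*} {m : ℕ} (a : ι → EuclideanSpace ℝ (Fin m)) (b : ι → ℝ) :
    Set (EuclideanSpace ℝ (Fin m)) :=
  {x | Bornology.IsBounded (arrFace a b (fun i => SignType.sign (⟪a i, x⟫ - b i)))}

namespace Stmt8
variable {ι : Type*} [Fintype ι] {m : ℕ}
variable (a : ι → EuclideanSpace ℝ (Fin m)) (b : ι → ℝ)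

/-- signed distance function of hyperplane `i` -/
noncomputable def hyp (i : ι) (x : EuclideanSpace ℝ (Fin m)) : ℝ := ⟪a i, x⟫ - b i

/-- sign vector of a point -/
noncomputable def sgnv (x : EuclideanSpace ℝ (Fin m)) : ι → SignType :=
  fun i => SignType.sign (hyp a b i x)

lemma mem_own_face (x : EuclideanSpace ℝ (Fin m)) : x ∈ arrFace a b (sgnv a b x) :=
  fun _ => rfl

lemma mem_boundedComplex_iff (x : EuclideanSpace ℝ (Fin m)) :
    x ∈ boundedComplex a b ↔ Bornology.IsBounded (arrFace a b (sgnv a b x)) := Iff.rfl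

lemma hyp_add_smul (i : ι) (x d : EuclideanSpace ℝ (Fin m)) (t : ℝ) :
    hyp a b i (x + t • d) = hyp a b i x + t * ⟪a i, d⟫ := by
  unfold hyp; rw [inner_add_right, real_inner_smul_right]; ring

/-- a direction compatible with a sign vector -/
def compatDir (σ : ι → SignType) (d : EuclideanSpace ℝ (Fin m)) : Prop :=
  ∀ i, (σ i = 0 → ⟪a i, d⟫ = 0) ∧ (σ i ≠ 0 → 0 ≤ (σ i : ℝ) * ⟪a i, d⟫)

lemma ray_mem_face {σ : ι → SignType} {x d : EuclideanSpace ℝ (Fin m)}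
    (hx : x ∈ arrFace a b σ) (hd : compatDir a σ d) {t : ℝ} (ht : 0 ≤ t) :
    x + t • d ∈ arrFace a b σ := by
  intro i
  have hxi : SignType.sign (hyp a b i x) = σ i := hx i
  have hsum : (⟪a i, x + t • d⟫ : ℝ) - b i = hyp a b i x + t * ⟪a i, d⟫ := hyp_add_smul a b i x d t
  show SignType.sign ((⟪a i, x + t • d⟫ : ℝ) - b i) = σ i
  rw [hsum]
  rcases hσ : σ i with _ | _ | _
  · -- zero
    have h1 : hyp a b i x = 0 := by
      have := hxi; rw [hσ] at this; exact sign_eq_zero_iff.mp this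
    have h2 : ⟪a i, d⟫ = (0:ℝ) := (hd i).1 hσ
    rw [h1, h2]; simp [hσ]
  · -- neg
    have h1 : hyp a b i x < 0 := by
      have := hxi; rw [hσ] at this; exact sign_eq_neg_one_iff.mp this
    have h2 : 0 ≤ (σ i : ℝ) * ⟪a i, d⟫ := (hd i).2 (by rw [hσ]; decide)
    have hc : ((σ i : SignType) : ℝ) = -1 := by rw [hσ]; rfl
    rw [hc] at h2
    have hv : (⟪a i, d⟫:ℝ) ≤ 0 := by linarith
    have htv : t * ⟪a i, d⟫ ≤ 0 := mul_nonpos_of_nonneg_of_nonpos ht hv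
    have : hyp a b i x + t * ⟪a i, d⟫ < 0 := by linarith
    rw [sign_eq_neg_one_iff.mpr this]; rfl
  · -- pos
    have h1 : 0 < hyp a b i x := by
      have := hxi; rw [hσ] at this; exact sign_eq_one_iff.mp this
    have h2 : 0 ≤ (σ i : ℝ) * ⟪a i, d⟫ := (hd i).2 (by rw [hσ]; decide)
    have hc : ((σ i : SignType) : ℝ) = 1 := by rw [hσ]; rfl
    rw [hc] at h2
    have hv : (0:ℝ) ≤ ⟪a i, d⟫ := by linarith
    have htv : 0 ≤ t * ⟪a i, d⟫ := mul_nonneg ht hv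
    have : 0 < hyp a b i x + t * ⟪a i, d⟫ := by linarith
    rw [sign_eq_one_iff.mpr this]; rfl

/-- a face containing a ray is unbounded -/
lemma not_bounded_of_compatDir {σ : ι → SignType} {x d : EuclideanSpace ℝ (Fin m)}
    (hx : x ∈ arrFace a b σ) (hd : compatDir a σ d) (hd0 : d ≠ 0) :
    ¬ Bornology.IsBounded (arrFace a b σ) := by
  intro hb
  obtain ⟨r, hr⟩ := hb.subset_closedBall (0 : EuclideanSpace ℝ (Fin m))
  have hxr : ‖x‖ ≤ r := by
    have := hr hx; rwa [Metric.mem_closedBall, dist_zero_right] at this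
  have hr0 : (0:ℝ) ≤ r := le_trans (norm_nonneg x) hxr
  have hdpos : 0 < ‖d‖ := norm_pos_iff.mpr hd0
  set t : ℝ := (r + ‖x‖ + 1) / ‖d‖ with ht
  have htpos : 0 ≤ t := by
    rw [ht]
    have : (0:ℝ) ≤ r + ‖x‖ + 1 := by have := norm_nonneg x; linarith
    exact div_nonneg this hdpos.le
  have hmem := ray_mem_face a b hx hd htpos
  have hball := hr hmem
  rw [Metric.mem_closedBall, dist_zero_right] at hball
  have h2 : ‖t • d‖ = t * ‖d‖ := by rw [norm_smul, Real.norm_eq_abs, abs_of_nonneg htpos]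
  have tri : ‖t • d‖ ≤ ‖x + t • d‖ + ‖x‖ := by
    have h := norm_add_le (x + t • d) (-x)
    simpa [add_comm] using h
  have h3 : t * ‖d‖ = r + ‖x‖ + 1 := by
    rw [ht]; field_simp
  nlinarith [hball, tri, h2, h3]

end Stmt8

namespace Stmt8
variable {ι : Type*} [Fintype ι] {m : ℕ}
variable (a : ι → EuclideanSpace ℝ (Fin m)) (b : ι → ℝ)

lemma sign_coe_mul_nonneg (r : ℝ) : 0 ≤ (SignType.sign r : ℝ) * r := by
  rcases lt_trichotomy r 0 with h | h | h
  · rw [sign_neg h]; simp; linarith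
  · simp [h]
  · rw [sign_pos h]; simp; linarith

lemma sign_coe_mul_pos {r : ℝ} (hr : r ≠ 0) : 0 < (SignType.sign r : ℝ) * r := by
  rcases lt_trichotomy r 0 with h | h | h
  · rw [sign_neg h]; simp; linarith
  · exact absurd h hr
  · rw [sign_pos h]; simp; linarith

/-- an unbounded nonempty face has a recession direction -/
lemma exists_compatDir_of_not_bounded {σ : ι → SignType} {x : EuclideanSpace ℝ (Fin m)}
    (hx : x ∈ arrFace a b σ) (hnb : ¬ Bornology.IsBounded (arrFace a b σ)) :
    ∃ d : EuclideanSpace ℝ (Fin m), ‖d‖ = 1 ∧ compatDir a σ d := by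
  -- get a sequence escaping to infinity
  have hseq : ∀ n : ℕ, ∃ z, z ∈ arrFace a b σ ∧ (n : ℝ) + ‖x‖ < ‖z‖ := by
    intro n
    by_contra hcon
    push_neg at hcon
    exact hnb (isBounded_iff_forall_norm_le.mpr ⟨(n : ℝ) + ‖x‖, hcon⟩)
  choose z hz hznorm using hseq
  have hne : ∀ n, z n - x ≠ 0 := by
    intro n h
    have hzx : z n = x := by rwa [sub_eq_zero] at h
    have h2 := hznorm n
    rw [hzx] at h2
    have hn : (0:ℝ) ≤ n := Nat.cast_nonneg n
    linarith
  have hnormbig : ∀ n : ℕ, (n : ℝ) < ‖z n - x‖ := by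
    intro n
    have h1 := norm_sub_norm_le (z n) x
    have := hznorm n
    calc (n:ℝ) < ‖z n‖ - ‖x‖ := by linarith
    _ ≤ |‖z n‖ - ‖x‖| := le_abs_self _
    _ ≤ ‖z n - x‖ := abs_norm_sub_norm_le _ _
  set u : ℕ → EuclideanSpace ℝ (Fin m) := fun n => ‖z n - x‖⁻¹ • (z n - x) with hu
  have hupos : ∀ n : ℕ, (0:ℝ) < ‖z n - x‖ := by
    intro n; exact norm_pos_iff.mpr (hne n)
  have huS : ∀ n, u n ∈ Metric.sphere (0 : EuclideanSpace ℝ (Fin m)) 1 := by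
    intro n
    rw [Metric.mem_sphere, dist_zero_right, hu]
    rw [norm_smul, Real.norm_eq_abs, abs_of_pos (inv_pos.mpr (hupos n)),
      inv_mul_cancel₀ (hupos n).ne']
  obtain ⟨d, hdS, φ, hφ, hconv⟩ := (isCompact_sphere (0:EuclideanSpace ℝ (Fin m)) 1).tendsto_subseq huS
  have hd1 : ‖d‖ = 1 := by rwa [Metric.mem_sphere, dist_zero_right] at hdS
  refine ⟨d, hd1, ?_⟩
  have hinner_tendsto : ∀ i, Filter.Tendsto (fun k => (⟪a i, u (φ k)⟫:ℝ))
      Filter.atTop (nhds ⟪a i, d⟫) := by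
    intro i
    exact ((continuous_const.inner continuous_id).continuousAt.tendsto.comp hconv)
  have hinner_u : ∀ i n, (⟪a i, u n⟫:ℝ) = ‖z n - x‖⁻¹ * (hyp a b i (z n) - hyp a b i x) := by
    intro i n
    rw [hu]
    simp only [real_inner_smul_right, inner_sub_right]
    unfold hyp; ring
  intro i
  constructor
  · intro hσ0
    have hzero : ∀ n, (⟪a i, u n⟫:ℝ) = 0 := by
      intro n
      rw [hinner_u]
      have h1 : hyp a b i x = 0 := by
        have := hx i; rw [hσ0] at this; exact sign_eq_zero_iff.mp this
      have h2 : hyp a b i (z n) = 0 := by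
        have := hz n i; rw [hσ0] at this; exact sign_eq_zero_iff.mp this
      rw [h1, h2]; ring
    have : Filter.Tendsto (fun k => (⟪a i, u (φ k)⟫:ℝ)) Filter.atTop (nhds 0) := by
      simp only [hzero]; exact tendsto_const_nhds
    exact tendsto_nhds_unique (hinner_tendsto i) this
  · intro hσ0
    -- (σ i) * ⟪a i, u n⟫ ≥ -( |hyp i x| ) * ‖z n - x‖⁻¹
    have hlow : ∀ n, -|hyp a b i x| * ‖z n - x‖⁻¹ ≤ (σ i : ℝ) * ⟪a i, u n⟫ := by
      intro n
      rw [hinner_u]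
      have h2 : 0 ≤ (σ i:ℝ) * hyp a b i (z n) := by
        have hzs := hz n i
        rw [← hzs]
        exact sign_coe_mul_nonneg _
      have h3 : -|hyp a b i x| ≤ -(σ i:ℝ) * hyp a b i x := by
        have hab : |(σ i:ℝ)| ≤ 1 := by
          rcases (σ i) with _ | _ | _ <;> simp
        have h5 : (σ i:ℝ) * hyp a b i x ≤ |(σ i:ℝ) * hyp a b i x| := le_abs_self _
        have h6 : |(σ i:ℝ) * hyp a b i x| = |(σ i:ℝ)| * |hyp a b i x| := abs_mul _ _
        nlinarith [abs_nonneg (hyp a b i x)]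
      have h4 : (0:ℝ) < ‖z n - x‖⁻¹ := inv_pos.mpr (hupos n)
      have expand : (σ i:ℝ) * (‖z n - x‖⁻¹ * (hyp a b i (z n) - hyp a b i x))
          = ‖z n - x‖⁻¹ * ((σ i:ℝ) * hyp a b i (z n)) + ‖z n - x‖⁻¹ * (-(σ i:ℝ) * hyp a b i x) := by
        ring
      rw [expand]
      have t1 : 0 ≤ ‖z n - x‖⁻¹ * ((σ i:ℝ) * hyp a b i (z n)) := mul_nonneg h4.le h2
      have t2 : ‖z n - x‖⁻¹ * (-(σ i:ℝ) * hyp a b i x) ≥ ‖z n - x‖⁻¹ * (-|hyp a b i x|) :=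
        mul_le_mul_of_nonneg_left h3 h4.le
      calc -|hyp a b i x| * ‖z n - x‖⁻¹ = ‖z n - x‖⁻¹ * (-|hyp a b i x|) := by ring
      _ ≤ ‖z n - x‖⁻¹ * (-(σ i:ℝ) * hyp a b i x) := t2
      _ ≤ ‖z n - x‖⁻¹ * ((σ i:ℝ) * hyp a b i (z n)) + ‖z n - x‖⁻¹ * (-(σ i:ℝ) * hyp a b i x) := by
        linarith [t1]
    -- the lower bound tends to 0
    have hnormtend : Filter.Tendsto (fun k => ‖z (φ k) - x‖) Filter.atTop Filter.atTop := by
      apply Filter.tendsto_atTop_mono (fun k => (hnormbig (φ k)).le.trans_eq' ?_)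
      · exact Filter.Tendsto.comp (g := fun n : ℕ => ((n:ℝ)))
          tendsto_natCast_atTop_atTop (hφ.tendsto_atTop)
      · rfl
    have hinvtend : Filter.Tendsto (fun k => ‖z (φ k) - x‖⁻¹) Filter.atTop (nhds 0) :=
      hnormtend.inv_tendsto_atTop
    have hlowtend : Filter.Tendsto (fun k => -|hyp a b i x| * ‖z (φ k) - x‖⁻¹)
        Filter.atTop (nhds 0) := by
      have := hinvtend.const_mul (-|hyp a b i x|)
      simpa using this
    have hσtend : Filter.Tendsto (fun k => (σ i:ℝ) * ⟪a i, u (φ k)⟫) Filter.atTop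
        (nhds ((σ i:ℝ) * ⟪a i, d⟫)) := (hinner_tendsto i).const_mul _
    exact le_of_tendsto_of_tendsto' hlowtend hσtend (fun k => hlow (φ k))

end Stmt8

-- ===== PROX =====


section Prox
variable {E : Type*} [NormedAddCommGroup E] [InnerProductSpace ℝ E] [ProperSpace E]

/-- The objective of the proximal problem. -/
noncomputable def proxFun (F : E → ℝ) (μ : ℝ) (y w z : E) : ℝ :=
  F z - ⟪y, z⟫ + μ / 2 * ‖z - w‖ ^ 2

lemma midpoint_norm_sq (z P w : E) :
    ‖midpoint ℝ z P - w‖ ^ 2 = (‖z - w‖ ^ 2 + ‖P - w‖ ^ 2) / 2 - ‖z - P‖ ^ 2 / 4 := by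
  have h : midpoint ℝ z P - w = ((2:ℝ)⁻¹) • ((z - w) + (P - w)) := by
    rw [midpoint_eq_smul_add, invOf_eq_inv]; module
  have par := parallelogram_law_with_norm ℝ (z - w) (P - w)
  have hzP : z - w - (P - w) = z - P := by abel
  rw [hzP] at par
  have par' : ‖z - w + (P - w)‖ ^ 2 + ‖z - P‖ ^ 2
      = 2 * (‖z - w‖ ^ 2 + ‖P - w‖ ^ 2) := by
    simpa [pow_two] using par
  rw [h, norm_smul]
  simp only [Real.norm_eq_abs]
  rw [abs_of_pos (by norm_num : (0:ℝ) < (2:ℝ)⁻¹), mul_pow]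
  linarith [par']

lemma proxFun_midpoint (F : E → ℝ) (μ : ℝ) (hμ : 0 ≤ μ) (y w : E)
    (hmid : ∀ z z', F (midpoint ℝ z z') ≤ (F z + F z') / 2) (z P : E) :
    proxFun F μ y w (midpoint ℝ z P) ≤
      (proxFun F μ y w z + proxFun F μ y w P) / 2 - μ / 2 * (‖z - P‖ ^ 2 / 4) := by
  have h1 : ⟪y, midpoint ℝ z P⟫ = (⟪y, z⟫ + ⟪y, P⟫) / 2 := by
    rw [midpoint_eq_smul_add, invOf_eq_inv, real_inner_smul_right, inner_add_right]; ring
  have h2 := midpoint_norm_sq z P w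
  have h3 := hmid z P
  simp only [proxFun, h1, h2]
  nlinarith [h3, hμ]

/-- strong minimality inequality -/
lemma proxFun_strong_min (F : E → ℝ) (μ : ℝ) (hμ : 0 < μ) (y w : E)
    (hmid : ∀ z z', F (midpoint ℝ z z') ≤ (F z + F z') / 2) (P : E)
    (hP : ∀ z, proxFun F μ y w P ≤ proxFun F μ y w z) (z : E) :
    proxFun F μ y w P + μ / 4 * ‖z - P‖ ^ 2 ≤ proxFun F μ y w z := by
  have h1 := proxFun_midpoint F μ hμ.le y w hmid z P
  have h2 := hP (midpoint ℝ z P)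
  nlinarith [h2, h1]

lemma proxFun_continuous (F : E → ℝ) (μ : ℝ) (hcont : Continuous F) (y w : E) :
    Continuous (proxFun F μ y w) := by
  unfold proxFun
  exact (hcont.sub (continuous_const.inner continuous_id)).add
    (continuous_const.mul ((continuous_id.sub continuous_const).norm.pow 2))

/-- existence and uniqueness of the proximal point -/
lemma proxFun_exists_unique (F : E → ℝ) (μ : ℝ) (hμ : 0 < μ)
    (hF0 : ∀ z, 0 ≤ F z) (hcont : Continuous F)
    (hmid : ∀ z z', F (midpoint ℝ z z') ≤ (F z + F z') / 2) (y w : E) :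
    ∃! P : E, ∀ z, proxFun F μ y w P ≤ proxFun F μ y w z := by
  set ρ : ℝ := (2/μ) * (‖y‖ + F w + 1) + 1 with hρdef
  have h2μ : 0 < 2/μ := by positivity
  have hApos : 0 < ‖y‖ + F w + 1 := by
    have := hF0 w; have := norm_nonneg y; linarith
  have hρpos : 0 < ρ := by
    have h := mul_pos h2μ hApos
    rw [hρdef]; linarith
  obtain ⟨P, hPmem, hPmin⟩ :
      ∃ P ∈ Metric.closedBall w ρ,
        ∀ z ∈ Metric.closedBall w ρ, proxFun F μ y w P ≤ proxFun F μ y w z := by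
    have hcomp : IsCompact (Metric.closedBall w ρ) := isCompact_closedBall _ _
    have hne : (Metric.closedBall w ρ).Nonempty :=
      ⟨w, Metric.mem_closedBall_self hρpos.le⟩
    obtain ⟨P, hP1, hP2⟩ := hcomp.exists_isMinOn hne
      (proxFun_continuous F μ hcont y w).continuousOn
    exact ⟨P, hP1, fun z hz => hP2 hz⟩
  have hglobal : ∀ z, proxFun F μ y w P ≤ proxFun F μ y w z := by
    intro z
    by_cases hz : z ∈ Metric.closedBall w ρ
    · exact hPmin z hz
    · have hGw : proxFun F μ y w P ≤ proxFun F μ y w w :=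
        hPmin w (Metric.mem_closedBall_self hρpos.le)
      refine hGw.trans ?_
      have hs : ρ < ‖z - w‖ := by
        simpa [Metric.mem_closedBall, dist_eq_norm] using hz
      have hy : ⟪y, z - w⟫ ≤ ‖y‖ * ‖z - w‖ := real_inner_le_norm y (z - w)
      have hGzw : proxFun F μ y w z - proxFun F μ y w w =
          F z - F w - ⟪y, z - w⟫ + μ / 2 * ‖z - w‖ ^ 2 := by
        simp only [proxFun, inner_sub_right, sub_self, norm_zero]
        ring
      have h1 : 0 ≤ F z := hF0 z
      have hyn : (0:ℝ) ≤ ‖y‖ := norm_nonneg y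
      have hFw : (0:ℝ) ≤ F w := hF0 w
      have hsp : (0:ℝ) < ‖z - w‖ := lt_of_le_of_lt hρpos.le hs
      have hs1 : (1:ℝ) ≤ ‖z - w‖ := by
        have : (0:ℝ) < (2/μ) * (‖y‖ + F w + 1) := mul_pos h2μ hApos
        rw [hρdef] at hs; linarith
      -- μ/2 * ‖z-w‖ > ‖y‖ + F w + 1
      have hkey1 : μ/2 * ((2/μ) * (‖y‖ + F w + 1)) = ‖y‖ + F w + 1 := by
        field_simp
      have hkey2 : ‖y‖ + F w + 1 < μ/2 * ‖z - w‖ := by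
        have hμ2 : (0:ℝ) < μ/2 := by positivity
        have := mul_lt_mul_of_pos_left hs hμ2
        rw [hρdef] at this
        nlinarith [this]
      have hkey3 : (‖y‖ + F w + 1) * ‖z - w‖ ≤ μ/2 * ‖z - w‖ ^ 2 := by
        have := mul_le_mul_of_nonneg_right hkey2.le hsp.le
        nlinarith [this]
      nlinarith [hkey3, hy, h1, hFw, hs1, hyn]
  refine ⟨P, hglobal, ?_⟩
  intro Q hQ
  have h1 := proxFun_strong_min F μ hμ y w hmid P hglobal Q
  have h2 := hQ P
  have h3 : ‖Q - P‖ ^ 2 ≤ 0 := by nlinarith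
  have h4 : ‖Q - P‖ = 0 := by nlinarith [norm_nonneg (Q - P), sq_nonneg ‖Q - P‖]
  have : Q - P = 0 := norm_eq_zero.mp h4
  exact sub_eq_zero.mp this

/-- Lipschitz-type estimate for minimizers with different parameters. -/
lemma proxFun_lipschitz (F : E → ℝ) (μ : ℝ) (hμ : 0 < μ)
    (hmid : ∀ z z', F (midpoint ℝ z z') ≤ (F z + F z') / 2)
    (y w y' w' P Q : E)
    (hP : ∀ z, proxFun F μ y w P ≤ proxFun F μ y w z)
    (hQ : ∀ z, proxFun F μ y' w' Q ≤ proxFun F μ y' w' z) :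
    ‖P - Q‖ ≤ (2/μ) * ‖y - y'‖ + 2 * ‖w - w'‖ := by
  have e1 := proxFun_strong_min F μ hμ y w hmid P hP Q
  have e2 := proxFun_strong_min F μ hμ y' w' hmid Q hQ P
  simp only [proxFun] at e1 e2
  have hnorm1 : ‖Q - w‖ ^ 2 = ‖Q‖ ^ 2 - 2 * ⟪Q, w⟫ + ‖w‖ ^ 2 := norm_sub_sq_real Q w
  have hnorm2 : ‖P - w‖ ^ 2 = ‖P‖ ^ 2 - 2 * ⟪P, w⟫ + ‖w‖ ^ 2 := norm_sub_sq_real P w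
  have hnorm3 : ‖P - w'‖ ^ 2 = ‖P‖ ^ 2 - 2 * ⟪P, w'⟫ + ‖w'‖ ^ 2 := norm_sub_sq_real P w'
  have hnorm4 : ‖Q - w'‖ ^ 2 = ‖Q‖ ^ 2 - 2 * ⟪Q, w'⟫ + ‖w'‖ ^ 2 := norm_sub_sq_real Q w'
  have hnorm5 : ‖Q - P‖ ^ 2 = ‖P - Q‖ ^ 2 := by rw [norm_sub_rev]
  rw [hnorm1, hnorm2, hnorm5] at e1
  rw [hnorm3, hnorm4] at e2
  have expand1 : ⟪y - y', P - Q⟫ = ⟪y, P⟫ - ⟪y, Q⟫ - ⟪y', P⟫ + ⟪y', Q⟫ := by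
    simp [inner_sub_left, inner_sub_right]; ring
  have expand2 : μ * ⟪P - Q, w - w'⟫
      = μ * ⟪P, w⟫ - μ * ⟪P, w'⟫ - μ * ⟪Q, w⟫ + μ * ⟪Q, w'⟫ := by
    have h : ⟪P - Q, w - w'⟫ = ⟪P, w⟫ - ⟪P, w'⟫ - ⟪Q, w⟫ + ⟪Q, w'⟫ := by
      simp [inner_sub_left, inner_sub_right]; ring
    rw [h]; ring
  have key : μ / 2 * ‖P - Q‖ ^ 2 ≤ ⟪y - y', P - Q⟫ + μ * ⟪P - Q, w - w'⟫ := by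
    rw [expand1, expand2]
    have sum := add_le_add e1 e2
    ring_nf at sum ⊢
    linarith [sum]
  have hcs1 : ⟪y - y', P - Q⟫ ≤ ‖y - y'‖ * ‖P - Q‖ := real_inner_le_norm _ _
  have hcs2 : ⟪P - Q, w - w'⟫ ≤ ‖P - Q‖ * ‖w - w'‖ := real_inner_le_norm _ _
  have hrhs : (0:ℝ) ≤ (2/μ) * ‖y - y'‖ + 2 * ‖w - w'‖ := by
    have h2μ : (0:ℝ) ≤ 2/μ := by positivity
    have := norm_nonneg (y - y'); have := norm_nonneg (w - w'); positivity
  rcases eq_or_lt_of_le (norm_nonneg (P - Q)) with h0 | h0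
  · rw [← h0]; exact hrhs
  · have h3 : μ / 2 * ‖P - Q‖ ≤ ‖y - y'‖ + μ * ‖w - w'‖ := by
      have hcs2' : μ * ⟪P - Q, w - w'⟫ ≤ μ * (‖P - Q‖ * ‖w - w'‖) :=
        mul_le_mul_of_nonneg_left hcs2 hμ.le
      have hup : ⟪y - y', P - Q⟫ + μ * ⟪P - Q, w - w'⟫
          ≤ (‖y - y'‖ + μ * ‖w - w'‖) * ‖P - Q‖ := by
        ring_nf
        ring_nf at hcs1 hcs2'
        linarith [hcs1, hcs2']
      nlinarith [key.trans hup, h0]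
    have h2μ : (0:ℝ) < 2/μ := by positivity
    have hmul := mul_le_mul_of_nonneg_left h3 h2μ.le
    have hfld1 : (2/μ) * (μ/2 * ‖P - Q‖) = ‖P - Q‖ := by field_simp
    have hfld2 : (2/μ) * (‖y - y'‖ + μ * ‖w - w'‖)
        = (2/μ) * ‖y - y'‖ + 2 * ‖w - w'‖ := by field_simp
    rw [hfld1, hfld2] at hmul
    exact hmul

end Prox

-- ===== MARGIN =====
namespace Stmt8
variable {ι : Type*} [Fintype ι] {m : ℕ}
variable (a : ι → EuclideanSpace ℝ (Fin m)) (b : ι → ℝ)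

noncomputable def clampR (t : ℝ) : ℝ := max (-1) (min 1 t)

lemma clampR_abs_le (t : ℝ) : |clampR t| ≤ 1 := by
  unfold clampR
  rw [abs_le]
  constructor
  · exact le_max_left _ _
  · exact max_le (by norm_num) (le_trans (min_le_left _ _) le_rfl)

lemma clampR_nonneg_of_nonneg {t : ℝ} (h : 0 ≤ t) : 0 ≤ clampR t := by
  unfold clampR
  exact le_max_of_le_right (le_min (by norm_num) h)

lemma clampR_nonpos_of_nonpos {t : ℝ} (h : t ≤ 0) : clampR t ≤ 0 := by
  unfold clampR
  exact max_le (by norm_num) (min_le_right _ _ |>.trans h)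

lemma clampR_zero : clampR 0 = 0 := by unfold clampR; norm_num

lemma clampR_of_one_le {t : ℝ} (h : 1 ≤ t) : clampR t = 1 := by
  unfold clampR
  rw [min_eq_left h, max_eq_right (by norm_num)]

lemma clampR_of_le_neg_one {t : ℝ} (h : t ≤ -1) : clampR t = -1 := by
  unfold clampR
  rw [max_eq_left (min_le_right _ _ |>.trans h)]

lemma continuous_clampR : Continuous clampR :=
  continuous_const.max (continuous_const.min continuous_id)

noncomputable def uMap (s : ℝ) (x : EuclideanSpace ℝ (Fin m)) : EuclideanSpace ℝ (Fin m) :=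
  ∑ i, clampR (hyp a b i x / s) • a i

noncomputable def hZ (d : EuclideanSpace ℝ (Fin m)) : ℝ := ∑ i, |(⟪a i, d⟫:ℝ)|

noncomputable def gap (σ : ι → SignType) (d : EuclideanSpace ℝ (Fin m)) : ℝ :=
  ∑ i, (|(⟪a i, d⟫:ℝ)| - max ((σ i : ℝ) * ⟪a i, d⟫) 0)

lemma gap_term_nonneg (σ : ι → SignType) (d : EuclideanSpace ℝ (Fin m)) (i : ι) :
    0 ≤ |(⟪a i, d⟫:ℝ)| - max ((σ i : ℝ) * ⟪a i, d⟫) 0 := by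
  have h1 : max ((σ i : ℝ) * ⟪a i, d⟫) 0 ≤ |(⟪a i, d⟫:ℝ)| := by
    apply max_le _ (abs_nonneg _)
    have hab : |(σ i:ℝ)| ≤ 1 := by rcases (σ i) with _ | _ | _ <;> simp
    calc (σ i : ℝ) * ⟪a i, d⟫ ≤ |(σ i : ℝ) * ⟪a i, d⟫| := le_abs_self _
    _ = |(σ i : ℝ)| * |(⟪a i, d⟫:ℝ)| := abs_mul _ _
    _ ≤ 1 * |(⟪a i, d⟫:ℝ)| := mul_le_mul_of_nonneg_right hab (abs_nonneg _)
    _ = |(⟪a i, d⟫:ℝ)| := one_mul _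
  linarith

lemma gap_nonneg (σ : ι → SignType) (d : EuclideanSpace ℝ (Fin m)) : 0 ≤ gap a σ d :=
  Finset.sum_nonneg fun i _ => gap_term_nonneg a σ d i

lemma gap_smul (σ : ι → SignType) (d : EuclideanSpace ℝ (Fin m)) {t : ℝ} (ht : 0 ≤ t) :
    gap a σ (t • d) = t * gap a σ d := by
  unfold gap
  rw [Finset.mul_sum]
  congr 1; funext i
  rw [real_inner_smul_right]
  rw [abs_mul, abs_of_nonneg ht]
  rcases le_or_gt 0 ((σ i : ℝ) * ⟪a i, d⟫) with hc | hc
  · rw [max_eq_left (by nlinarith : (0:ℝ) ≤ (σ i : ℝ) * (t * ⟪a i, d⟫)),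
      max_eq_left hc]
    ring
  · rw [max_eq_right (by nlinarith : ((σ i : ℝ) * (t * ⟪a i, d⟫)) ≤ 0),
      max_eq_right hc.le]
    ring

/-- zero gap means a compatible direction -/
lemma compatDir_of_gap_eq_zero {σ : ι → SignType} {d : EuclideanSpace ℝ (Fin m)}
    (h : gap a σ d = 0) :
    ∀ i, (σ i = 0 → (⟪a i, d⟫:ℝ) = 0) ∧ (σ i ≠ 0 → 0 ≤ (σ i : ℝ) * ⟪a i, d⟫) := by
  have hterm : ∀ i ∈ Finset.univ, (|(⟪a i, d⟫:ℝ)| - max ((σ i : ℝ) * ⟪a i, d⟫) 0) = 0 := by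
    apply (Finset.sum_eq_zero_iff_of_nonneg (fun i _ => gap_term_nonneg a σ d i)).mp h
  intro i
  have hi := hterm i (Finset.mem_univ i)
  constructor
  · intro hσ
    rw [hσ] at hi
    have h0 : (((0:SignType)):ℝ) * ⟪a i, d⟫ = 0 := by
      rw [show (((0:SignType)):ℝ) = 0 from rfl]; ring
    rw [h0, max_self] at hi
    exact abs_eq_zero.mp (by linarith)
  · intro hσ
    by_contra hneg
    push_neg at hneg
    have hmax : max ((σ i : ℝ) * ⟪a i, d⟫) 0 = 0 := max_eq_right hneg.le
    rw [hmax] at hi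
    have habs : |(⟪a i, d⟫:ℝ)| = 0 := by linarith
    have : (⟪a i, d⟫:ℝ) = 0 := abs_eq_zero.mp habs
    rw [this] at hneg
    simp at hneg

/-- key estimate: compatible-sign bounded coefficients pair below hZ minus gap -/
lemma inner_coeff_le {σ : ι → SignType} {c : ι → ℝ}
    (hc0 : ∀ i, σ i = 0 → c i = 0)
    (hcs : ∀ i, 0 ≤ (σ i : ℝ) * c i)
    (hc1 : ∀ i, |c i| ≤ 1)
    (d : EuclideanSpace ℝ (Fin m)) :
    (⟪∑ i, c i • a i, d⟫:ℝ) ≤ hZ a d - gap a σ d := by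
  have hsum : (⟪∑ i, c i • a i, d⟫:ℝ) = ∑ i, c i * ⟪a i, d⟫ := by
    rw [sum_inner]
    congr 1; funext i
    rw [real_inner_smul_left]
  rw [hsum]
  unfold hZ gap
  rw [← Finset.sum_sub_distrib]
  apply Finset.sum_le_sum
  intro i _
  have hgoal : c i * ⟪a i, d⟫ ≤ max ((σ i : ℝ) * ⟪a i, d⟫) 0 := by
    rcases hσ : σ i with _ | _ | _
    · rw [hc0 i hσ]; simp
    · -- σ i = -1 : c i ∈ [-1, 0]
      have hcs' := hcs i
      rw [hσ] at hcs'
      have hc : ((-1:SignType):ℝ) = -1 := rfl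
      have hcneg : c i ≤ 0 := by
        have : (((SignType.neg):SignType):ℝ) * c i = -(c i) := by
          rw [show (((SignType.neg):SignType):ℝ) = -1 from rfl]; ring
        rw [this] at hcs'; linarith
      have hcge : -1 ≤ c i := (abs_le.mp (hc1 i)).1
      have hterm : ((SignType.neg:SignType) : ℝ) * ⟪a i, d⟫ = -⟪a i, d⟫ := by
        rw [show (((SignType.neg):SignType):ℝ) = -1 from rfl]; ring
      rw [hterm]
      rcases le_or_gt (⟪a i, d⟫:ℝ) 0 with hv | hv
      · calc c i * ⟪a i, d⟫ ≤ (-1) * ⟪a i, d⟫ := by nlinarith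
        _ = -⟪a i, d⟫ := by ring
        _ ≤ max (-⟪a i, d⟫) 0 := le_max_left _ _
      · calc c i * ⟪a i, d⟫ ≤ 0 := by nlinarith
        _ ≤ max (-⟪a i, d⟫) 0 := le_max_right _ _
    · -- σ i = 1 : c i ∈ [0, 1]
      have hcs' := hcs i
      rw [hσ] at hcs'
      have hcpos : 0 ≤ c i := by
        have : (((SignType.pos):SignType):ℝ) * c i = c i := by
          rw [show (((SignType.pos):SignType):ℝ) = 1 from rfl]; ring
        rw [this] at hcs'; exact hcs'
      have hcle : c i ≤ 1 := (abs_le.mp (hc1 i)).2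
      have hterm : ((SignType.pos:SignType) : ℝ) * ⟪a i, d⟫ = ⟪a i, d⟫ := by
        rw [show (((SignType.pos):SignType):ℝ) = 1 from rfl]; ring
      rw [hterm]
      rcases le_or_gt 0 (⟪a i, d⟫:ℝ) with hv | hv
      · calc c i * ⟪a i, d⟫ ≤ 1 * ⟪a i, d⟫ := by nlinarith
        _ = ⟪a i, d⟫ := by ring
        _ ≤ max (⟪a i, d⟫) 0 := le_max_left _ _
      · calc c i * ⟪a i, d⟫ ≤ 0 := by nlinarith
        _ ≤ max (⟪a i, d⟫) 0 := le_max_right _ _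
  linarith

end Stmt8

-- ===== F AND SUBGRADIENTS =====
namespace Stmt8
variable {ι : Type*} [Fintype ι] {m : ℕ}
variable (a : ι → EuclideanSpace ℝ (Fin m)) (b : ι → ℝ)

noncomputable def fA (x : EuclideanSpace ℝ (Fin m)) : ℝ := ∑ i, |hyp a b i x|

lemma fA_nonneg (x : EuclideanSpace ℝ (Fin m)) : 0 ≤ fA a b x :=
  Finset.sum_nonneg fun i _ => abs_nonneg _

lemma hyp_continuous (i : ι) : Continuous (hyp a b i) := by
  unfold hyp
  exact (continuous_const.inner continuous_id).sub continuous_const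

lemma fA_continuous : Continuous (fA a b) :=
  continuous_finset_sum _ fun i _ => (hyp_continuous a b i).abs

lemma hyp_midpoint (i : ι) (z z' : EuclideanSpace ℝ (Fin m)) :
    hyp a b i (midpoint ℝ z z') = (hyp a b i z + hyp a b i z') / 2 := by
  unfold hyp
  rw [midpoint_eq_smul_add, invOf_eq_inv, real_inner_smul_right, inner_add_right]
  ring

lemma fA_midpoint (z z' : EuclideanSpace ℝ (Fin m)) :
    fA a b (midpoint ℝ z z') ≤ (fA a b z + fA a b z') / 2 := by
  unfold fA
  rw [div_eq_inv_mul, ← Finset.sum_add_distrib, Finset.mul_sum]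
  apply Finset.sum_le_sum
  intro i _
  rw [hyp_midpoint]
  have habs : |(hyp a b i z + hyp a b i z') / 2| ≤ (|hyp a b i z| + |hyp a b i z'|) / 2 := by
    rw [abs_div, abs_of_pos (by norm_num : (0:ℝ) < 2)]
    exact div_le_div_of_nonneg_right (abs_add_le _ _) (by norm_num)
  calc |(hyp a b i z + hyp a b i z') / 2| ≤ (|hyp a b i z| + |hyp a b i z'|) / 2 := habs
  _ = 2⁻¹ * (|hyp a b i z| + |hyp a b i z'|) := by ring

lemma fA_lower (x : EuclideanSpace ℝ (Fin m)) :
    hZ a x - (∑ i, |b i|) ≤ fA a b x := by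
  unfold fA hZ
  rw [← Finset.sum_sub_distrib]
  apply Finset.sum_le_sum
  intro i _
  unfold hyp
  have := abs_sub_abs_le_abs_sub (⟪a i, x⟫ : ℝ) (b i)
  linarith

lemma fA_upper (w : EuclideanSpace ℝ (Fin m)) :
    fA a b w ≤ (∑ i, ‖a i‖) * ‖w‖ + ∑ i, |b i| := by
  unfold fA
  rw [Finset.sum_mul, ← Finset.sum_add_distrib]
  apply Finset.sum_le_sum
  intro i _
  unfold hyp
  have h1 : |(⟪a i, w⟫:ℝ) - b i| ≤ |(⟪a i, w⟫:ℝ)| + |b i| := abs_sub _ _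
  have h2 : |(⟪a i, w⟫:ℝ)| ≤ ‖a i‖ * ‖w‖ := abs_real_inner_le_norm _ _
  linarith

lemma sign_coe_mul_self (r : ℝ) : (SignType.sign r : ℝ) * r = |r| := by
  rcases lt_trichotomy r 0 with h | h | h
  · rw [sign_neg h, abs_of_neg h]; show (-1:ℝ) * r = -r; ring
  · simp [h]
  · rw [sign_pos h, abs_of_pos h]; show (1:ℝ) * r = r; ring

/-- exact subgradient inequality from coefficients -/
lemma subgrad_of_coeffs {c : ι → ℝ} {w : EuclideanSpace ℝ (Fin m)}
    (hc1 : ∀ i, |c i| ≤ 1)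
    (hcs : ∀ i, hyp a b i w ≠ 0 → c i = (SignType.sign (hyp a b i w) : ℝ)) (z : EuclideanSpace ℝ (Fin m)) :
    fA a b w + ⟪∑ i, c i • a i, z - w⟫ ≤ fA a b z := by
  have hsum : (⟪∑ i, c i • a i, z - w⟫:ℝ) = ∑ i, c i * (hyp a b i z - hyp a b i w) := by
    rw [sum_inner]
    congr 1; funext i
    rw [real_inner_smul_left]
    unfold hyp
    rw [inner_sub_right]
    ring
  rw [hsum]
  unfold fA
  rw [← Finset.sum_add_distrib]
  apply Finset.sum_le_sum
  intro i _
  by_cases h : hyp a b i w = 0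
  · rw [h]
    simp only [abs_zero, sub_zero, zero_add]
    calc c i * hyp a b i z ≤ |c i * hyp a b i z| := le_abs_self _
    _ = |c i| * |hyp a b i z| := abs_mul _ _
    _ ≤ 1 * |hyp a b i z| := mul_le_mul_of_nonneg_right (hc1 i) (abs_nonneg _)
    _ = |hyp a b i z| := one_mul _
  · rw [hcs i h]
    have h1 : (SignType.sign (hyp a b i w) : ℝ) * hyp a b i w = |hyp a b i w| :=
      sign_coe_mul_self _
    have h2 : (SignType.sign (hyp a b i w) : ℝ) * hyp a b i z ≤ |hyp a b i z| := by
      have hab : |(SignType.sign (hyp a b i w) : ℝ)| ≤ 1 := by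
        rcases (SignType.sign (hyp a b i w)) with _ | _ | _ <;> simp
      calc (SignType.sign (hyp a b i w) : ℝ) * hyp a b i z
          ≤ |(SignType.sign (hyp a b i w) : ℝ) * hyp a b i z| := le_abs_self _
      _ = |(SignType.sign (hyp a b i w) : ℝ)| * |hyp a b i z| := abs_mul _ _
      _ ≤ 1 * |hyp a b i z| := mul_le_mul_of_nonneg_right hab (abs_nonneg _)
      _ = |hyp a b i z| := one_mul _
    nlinarith [h1, h2]

/-- the clamped coefficient map has compatible signs, giving the margin bound -/
lemma uMap_inner_le (x : EuclideanSpace ℝ (Fin m)) {s : ℝ} (hs : 0 < s)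
    (d : EuclideanSpace ℝ (Fin m)) :
    (⟪uMap a b s x, d⟫:ℝ) ≤ hZ a d - gap a (sgnv a b x) d := by
  apply inner_coeff_le
  · intro i hσ
    have h0 : hyp a b i x = 0 := by
      have : SignType.sign (hyp a b i x) = 0 := hσ
      exact sign_eq_zero_iff.mp this
    rw [h0, zero_div, clampR_zero]
  · intro i
    rcases lt_trichotomy (hyp a b i x) 0 with h | h | h
    · have hs1 : sgnv a b x i = -1 := by unfold sgnv; rw [sign_neg h]
      have : clampR (hyp a b i x / s) ≤ 0 :=
        clampR_nonpos_of_nonpos (div_nonpos_of_nonpos_of_nonneg h.le hs.le)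
      rw [hs1]
      show 0 ≤ ((-1 : SignType):ℝ) * _
      rw [show (((-1 : SignType)):ℝ) = -1 from rfl]
      nlinarith
    · have hs1 : sgnv a b x i = 0 := by unfold sgnv; rw [h, sign_zero]
      rw [hs1, h, zero_div, clampR_zero]
      show (0:ℝ) ≤ ((0 : SignType):ℝ) * 0
      norm_num
    · have hs1 : sgnv a b x i = 1 := by unfold sgnv; rw [sign_pos h]
      have : 0 ≤ clampR (hyp a b i x / s) :=
        clampR_nonneg_of_nonneg (div_nonneg h.le hs.le)
      rw [hs1]
      show 0 ≤ ((1 : SignType):ℝ) * _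
      rw [show (((1 : SignType)):ℝ) = 1 from rfl]
      nlinarith
  · intro i
    exact clampR_abs_le _

lemma uMap_norm_le (x : EuclideanSpace ℝ (Fin m)) (s : ℝ) :
    ‖uMap a b s x‖ ≤ ∑ i, ‖a i‖ := by
  unfold uMap
  apply (norm_sum_le _ _).trans
  apply Finset.sum_le_sum
  intro i _
  rw [norm_smul, Real.norm_eq_abs]
  calc |clampR (hyp a b i x / s)| * ‖a i‖ ≤ 1 * ‖a i‖ :=
    mul_le_mul_of_nonneg_right (clampR_abs_le _) (norm_nonneg _)
  _ = ‖a i‖ := one_mul _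

end Stmt8

-- ===== CERTIFICATE =====
namespace Stmt8
variable {ι : Type*} [Fintype ι] {m : ℕ}
variable (a : ι → EuclideanSpace ℝ (Fin m)) (b : ι → ℝ)

lemma prox_dist_bound (μ : ℝ) (hμ : 0 < μ) (mbar : ℝ) (hmb : 0 ≤ mbar)
    (y w P : EuclideanSpace ℝ (Fin m))
    (hmargin : ∀ d, (⟪y, d⟫:ℝ) ≤ hZ a d - mbar * ‖d‖)
    (hP : ∀ z, proxFun (fA a b) μ y w P ≤ proxFun (fA a b) μ y w z) :
    μ * ‖P - w‖ ^ 2 ≤ 2 * ((∑ i, ‖a i‖) * ‖w‖ + 2 * (∑ i, |b i|) + ‖y‖ * ‖w‖) := by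
  have h1 := hP w
  simp only [proxFun, sub_self, norm_zero] at h1
  -- h1 : fA P - ⟪y,P⟫ + μ/2 ‖P-w‖² ≤ fA w - ⟪y,w⟫ + μ/2 * 0^2
  have h2 : hZ a P - (∑ i, |b i|) ≤ fA a b P := fA_lower a b P
  have h3 : (⟪y, P⟫:ℝ) ≤ hZ a P := by
    have := hmargin P
    nlinarith [mul_nonneg hmb (norm_nonneg P)]
  have h4 : fA a b w ≤ (∑ i, ‖a i‖) * ‖w‖ + ∑ i, |b i| := fA_upper a b w
  have h5 : -(⟪y, w⟫:ℝ) ≤ ‖y‖ * ‖w‖ := by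
    have := abs_real_inner_le_norm y w
    have := neg_abs_le (⟪y, w⟫:ℝ)
    linarith
  nlinarith [h1, h2, h3, h4, h5]

/-- THE CERTIFICATE: the prox point of a margin-interior dual point lies in the
bounded complex -/
lemma prox_mem_boundedComplex (μ : ℝ) (hμ : 0 < μ) (mbar : ℝ) (hmbar : 0 < mbar)
    (y w P : EuclideanSpace ℝ (Fin m))
    (hmargin : ∀ d, (⟪y, d⟫:ℝ) ≤ hZ a d - mbar * ‖d‖)
    (hPw : μ * ‖P - w‖ ≤ mbar / 2)
    (hP : ∀ z, proxFun (fA a b) μ y w P ≤ proxFun (fA a b) μ y w z) :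
    P ∈ boundedComplex a b := by
  rw [show (boundedComplex a b) = {x | Bornology.IsBounded (arrFace a b (sgnv a b x))} from rfl]
  by_contra hnb
  simp only [Set.mem_setOf_eq] at hnb
  obtain ⟨d, hd1, hcompat⟩ := exists_compatDir_of_not_bounded a b (mem_own_face a b P) hnb
  -- step size threshold
  set A := Finset.univ.filter (fun i => sgnv a b P i ≠ 0) with hA
  set t₀ : ℝ := if hAne : A.Nonempty
    then A.inf' hAne (fun i => |hyp a b i P| / (|(⟪a i, d⟫:ℝ)| + 1)) else 1 with ht₀
  have ht₀pos : 0 < t₀ := by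
    rw [ht₀]
    split_ifs with hAne
    · apply (Finset.lt_inf'_iff _).mpr
      intro i hi
      have hi' : sgnv a b P i ≠ 0 := (Finset.mem_filter.mp hi).2
      have : hyp a b i P ≠ 0 := by
        intro h0
        apply hi'
        unfold sgnv
        rw [h0, sign_zero]
      have h1 : 0 < |hyp a b i P| := abs_pos.mpr this
      have h2 : 0 < |(⟪a i, d⟫:ℝ)| + 1 := by positivity
      positivity
    · norm_num
  -- step estimate on each term
  have hterm : ∀ t, 0 < t → t < t₀ → ∀ i,
      |hyp a b i (P + (-t) • d)| = |hyp a b i P| - t * |(⟪a i, d⟫:ℝ)| := by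
    intro t ht htlt i
    rw [hyp_add_smul]
    by_cases hσ : sgnv a b P i = 0
    · have h0 : hyp a b i P = 0 := sign_eq_zero_iff.mp hσ
      have hv : (⟪a i, d⟫:ℝ) = 0 := (hcompat i).1 hσ
      rw [h0, hv]
      simp
    · -- active constraint
      have hyp0 : hyp a b i P ≠ 0 := by
        intro h0
        exact hσ (by unfold sgnv; rw [h0, sign_zero])
      have hi : i ∈ A := Finset.mem_filter.mpr ⟨Finset.mem_univ i, hσ⟩
      have htle : t < |hyp a b i P| / (|(⟪a i, d⟫:ℝ)| + 1) := by
        rw [ht₀] at htlt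
        have hAne : A.Nonempty := ⟨i, hi⟩
        rw [dif_pos hAne] at htlt
        exact lt_of_lt_of_le htlt (Finset.inf'_le _ hi)
      have htv : t * |(⟪a i, d⟫:ℝ)| < |hyp a b i P| := by
        have h2 : 0 < |(⟪a i, d⟫:ℝ)| + 1 := by positivity
        rw [lt_div_iff₀ h2] at htle
        nlinarith [abs_nonneg (⟪a i, d⟫:ℝ), ht]
      -- compatible : σ * v = |v| and σ * hyp = |hyp|
      have hcomp2 := (hcompat i).2 hσ
      have hsv : ((sgnv a b P i : ℝ)) * ⟪a i, d⟫ = |(⟪a i, d⟫:ℝ)| := by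
        have habs1 : |(sgnv a b P i : ℝ)| = 1 := by
          unfold sgnv
          rcases lt_trichotomy (hyp a b i P) 0 with h | h | h
          · rw [sign_neg h]; norm_num
          · exact absurd h hyp0
          · rw [sign_pos h]; norm_num
        have := abs_mul ((sgnv a b P i : ℝ)) (⟪a i, d⟫:ℝ)
        rw [habs1, one_mul] at this
        rw [← this]
        exact (abs_of_nonneg hcomp2).symm
      have hsh : ((sgnv a b P i : ℝ)) * hyp a b i P = |hyp a b i P| := by
        unfold sgnv
        exact sign_coe_mul_self _
      have hsq : ((sgnv a b P i : ℝ)) * ((sgnv a b P i : ℝ)) = 1 := by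
        unfold sgnv
        rcases lt_trichotomy (hyp a b i P) 0 with h | h | h
        · rw [sign_neg h]; norm_num
        · exact absurd h hyp0
        · rw [sign_pos h]; norm_num
      -- |hyp + (-t) v| = |σ| |hyp - t v| = |σ(hyp) - t σ(v)| = | |hyp| - t |v| |
      have key : |hyp a b i P + (-t) * ⟪a i, d⟫| = |(|hyp a b i P| - t * |(⟪a i, d⟫:ℝ)|)| := by
        have : |hyp a b i P + (-t) * ⟪a i, d⟫|
            = |((sgnv a b P i : ℝ)) * (hyp a b i P + (-t) * ⟪a i, d⟫)| := by
          rw [abs_mul]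
          unfold sgnv
          rcases lt_trichotomy (hyp a b i P) 0 with h | h | h
          · rw [sign_neg h]; norm_num
          · exact absurd h hyp0
          · rw [sign_pos h]; norm_num
        rw [this]
        congr 1
        have expand : ((sgnv a b P i : ℝ)) * (hyp a b i P + (-t) * ⟪a i, d⟫)
            = ((sgnv a b P i : ℝ)) * hyp a b i P - t * (((sgnv a b P i : ℝ)) * ⟪a i, d⟫) := by
          ring
        rw [expand, hsh, hsv]
      rw [key, abs_of_nonneg (by linarith : 0 ≤ |hyp a b i P| - t * |(⟪a i, d⟫:ℝ)|)]
  -- f decreases linearly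
  have hfdec : ∀ t, 0 < t → t < t₀ → fA a b (P + (-t) • d) = fA a b P - t * hZ a d := by
    intro t ht htlt
    unfold fA hZ
    rw [Finset.mul_sum, ← Finset.sum_sub_distrib]
    congr 1; funext i
    exact hterm t ht htlt i
  -- strong minimality gives the slope estimate
  set Aslope : ℝ := (⟪y, d⟫:ℝ) - μ * ⟪P - w, d⟫ - hZ a d with hAslope
  have hineq : ∀ t, 0 < t → t < t₀ → -(μ/4) * t ≤ Aslope := by
    intro t ht htlt
    have hsm := proxFun_strong_min (fA a b) μ hμ y w (fA_midpoint a b) P hP (P + (-t) • d)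
    simp only [proxFun] at hsm
    rw [hfdec t ht htlt] at hsm
    have hnorm1 : ‖P + (-t) • d - P‖ ^ 2 = t^2 := by
      have : P + (-t) • d - P = (-t) • d := by abel
      rw [this, norm_smul, Real.norm_eq_abs, abs_neg, abs_of_pos ht, mul_pow, hd1]
      ring
    have hnorm2 : ‖P + (-t) • d - w‖ ^ 2 = ‖P - w‖^2 - 2 * t * ⟪P - w, d⟫ + t^2 := by
      have h : P + (-t) • d - w = (P - w) - t • d := by
        rw [neg_smul]; abel
      rw [h, norm_sub_sq_real, real_inner_smul_right, norm_smul, Real.norm_eq_abs,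
        abs_of_pos ht, mul_pow, hd1]
      ring
    have hinner : (⟪y, P + (-t) • d⟫:ℝ) = ⟪y, P⟫ - t * ⟪y, d⟫ := by
      rw [inner_add_right, real_inner_smul_right]
      ring
    rw [hnorm1, hnorm2, hinner] at hsm
    -- hsm : fAP - ⟪y,P⟫ + μ/2 ‖P-w‖² + μ/4 t² ≤ fAP - t hZ - ⟪y,P⟫ + t ⟪y,d⟫ + μ/2 (...)
    have hineq2 : -(μ/4) * t^2 ≤ t * Aslope := by
      rw [hAslope]
      nlinarith [hsm]
    nlinarith [hineq2, ht]
  have hAnonneg : 0 ≤ Aslope := by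
    by_contra hneg
    push_neg at hneg
    set t := min (t₀/2) ((-Aslope) * 2 / μ) with htdef
    have ht1 : 0 < t := by
      rw [htdef]
      apply lt_min (by linarith)
      have : 0 < -Aslope := by linarith
      positivity
    have ht2 : t < t₀ := by
      rw [htdef]
      calc min (t₀/2) ((-Aslope) * 2 / μ) ≤ t₀/2 := min_le_left _ _
      _ < t₀ := by linarith
    have h3 := hineq t ht1 ht2
    have h4 : t ≤ (-Aslope) * 2 / μ := by rw [htdef]; exact min_le_right _ _
    have h5 : μ * t ≤ (-Aslope) * 2 := by
      rw [div_eq_mul_inv] at h4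
      have h6 := mul_le_mul_of_nonneg_left h4 hμ.le
      have hinv : μ * μ⁻¹ = 1 := mul_inv_cancel₀ hμ.ne'
      nlinarith [h6, hinv]
    nlinarith [h3, h5, hμ, ht1]
  -- contradiction with margin
  have hm1 : (⟪y, d⟫:ℝ) ≤ hZ a d - mbar := by
    have := hmargin d
    rw [hd1] at this
    linarith
  have hm2 : -(μ * ⟪P - w, d⟫) ≤ mbar / 2 := by
    have hcs : (⟪P - w, d⟫:ℝ) ≥ -(‖P - w‖ * ‖d‖) := by
      have := abs_real_inner_le_norm (P - w) d
      have := neg_abs_le (⟪P - w, d⟫:ℝ)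
      linarith
    rw [hd1] at hcs
    nlinarith [hPw, hμ, norm_nonneg (P - w)]
  rw [hAslope] at hAnonneg
  linarith [hAnonneg, hm1, hm2]

end Stmt8

-- ===== MORE HELPERS =====
namespace Stmt8
variable {ι : Type*} [Fintype ι] {m : ℕ}
variable (a : ι → EuclideanSpace ℝ (Fin m)) (b : ι → ℝ)

/-- if `y` is a subgradient of `fA` at `w` then `w` minimizes the prox objective -/
lemma prox_min_at_subgrad (μ : ℝ) (hμ : 0 < μ) (y w : EuclideanSpace ℝ (Fin m))
    (hsub : ∀ z, fA a b w + ⟪y, z - w⟫ ≤ fA a b z) :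
    ∀ z, proxFun (fA a b) μ y w w ≤ proxFun (fA a b) μ y w z := by
  intro z
  have h1 := hsub z
  simp only [proxFun, sub_self, norm_zero]
  rw [inner_sub_right] at h1
  nlinarith [sq_nonneg ‖z - w‖, norm_nonneg (z - w), h1, hμ]

/-- near `x₀`, for small positive `s`, `uMap s x` is an exact subgradient at `x₀`. -/
lemma uMap_subgrad_near (x₀ : EuclideanSpace ℝ (Fin m)) :
    ∃ r > (0:ℝ), ∃ s₀ > (0:ℝ), ∀ x : EuclideanSpace ℝ (Fin m), ‖x - x₀‖ < r →
      ∀ s : ℝ, 0 < s → s < s₀ →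
      ∀ z, fA a b x₀ + ⟪uMap a b s x, z - x₀⟫ ≤ fA a b z := by
  classical
  set Bs := Finset.univ.filter (fun i => hyp a b i x₀ ≠ 0) with hBs
  by_cases hBne : Bs.Nonempty
  · set r := Bs.inf' hBne (fun i => |hyp a b i x₀| / (2 * (‖a i‖ + 1))) with hr
    set s₀ := Bs.inf' hBne (fun i => |hyp a b i x₀| / 2) with hs₀
    have hrpos : 0 < r := by
      rw [hr]
      apply (Finset.lt_inf'_iff _).mpr
      intro i hi
      have : hyp a b i x₀ ≠ 0 := (Finset.mem_filter.mp hi).2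
      have h1 : 0 < |hyp a b i x₀| := abs_pos.mpr this
      have h2 : 0 < 2 * (‖a i‖ + 1) := by positivity
      positivity
    have hs₀pos : 0 < s₀ := by
      rw [hs₀]
      apply (Finset.lt_inf'_iff _).mpr
      intro i hi
      have : hyp a b i x₀ ≠ 0 := (Finset.mem_filter.mp hi).2
      have h1 : 0 < |hyp a b i x₀| := abs_pos.mpr this
      positivity
    refine ⟨r, hrpos, s₀, hs₀pos, ?_⟩
    intro x hx s hs hss z
    apply subgrad_of_coeffs a b (fun i => clampR_abs_le _) ?_ z
    intro i hi
    have hiB : i ∈ Bs := Finset.mem_filter.mpr ⟨Finset.mem_univ i, hi⟩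
    have hdiff : |hyp a b i x - hyp a b i x₀| ≤ ‖a i‖ * ‖x - x₀‖ := by
      have : hyp a b i x - hyp a b i x₀ = ⟪a i, x - x₀⟫ := by
        unfold hyp; rw [inner_sub_right]; ring
      rw [this]
      exact abs_real_inner_le_norm _ _
    have hrle : ‖x - x₀‖ < |hyp a b i x₀| / (2 * (‖a i‖ + 1)) :=
      lt_of_lt_of_le hx (by rw [hr] at *; exact le_trans (le_refl r) (Finset.inf'_le _ hiB))
    have hsmall : ‖a i‖ * ‖x - x₀‖ < |hyp a b i x₀| / 2 := by
      have h2 : (0:ℝ) < 2 * (‖a i‖ + 1) := by positivity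
      rw [lt_div_iff₀ h2] at hrle
      have h3 : ‖a i‖ * ‖x - x₀‖ ≤ (‖a i‖ + 1) * ‖x - x₀‖ :=
        mul_le_mul_of_nonneg_right (by linarith) (norm_nonneg _)
      have h4 : 0 < |hyp a b i x₀| := abs_pos.mpr hi
      nlinarith [norm_nonneg (x - x₀), norm_nonneg (a i)]
    have hsle : s < |hyp a b i x₀| / 2 :=
      lt_of_lt_of_le hss (by rw [hs₀] at *; exact Finset.inf'_le _ hiB)
    have habs : |hyp a b i x₀| / 2 < |hyp a b i x| := by
      have := abs_sub_abs_le_abs_sub (hyp a b i x₀) (hyp a b i x)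
      have h5 : |hyp a b i x₀ - hyp a b i x| = |hyp a b i x - hyp a b i x₀| := abs_sub_comm _ _
      nlinarith [hdiff, hsmall]
    rcases lt_trichotomy (hyp a b i x₀) 0 with h | h | h
    · -- negative case: hyp x < 0 as well
      have hxneg : hyp a b i x < 0 := by
        rcases lt_trichotomy (hyp a b i x) 0 with h' | h' | h'
        · exact h'
        · exfalso; rw [h'] at habs; simp at habs; linarith [abs_nonneg (hyp a b i x₀)]
        · exfalso
          have : |hyp a b i x - hyp a b i x₀| = hyp a b i x - hyp a b i x₀ := by
            rw [abs_of_pos (by linarith)]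
          rw [abs_of_neg h] at hsmall habs hsle
          rw [abs_of_pos h'] at habs
          nlinarith [hdiff, this]
      have hclamp : clampR (hyp a b i x / s) = -1 := by
        apply clampR_of_le_neg_one
        rw [div_le_iff₀ hs]
        rw [abs_of_neg h] at habs hsle
        rw [abs_of_neg hxneg] at habs
        nlinarith
      rw [hclamp, sign_neg h]; rfl
    · exact absurd h hi
    · -- positive case
      have hxpos : 0 < hyp a b i x := by
        rcases lt_trichotomy (hyp a b i x) 0 with h' | h' | h'
        · exfalso
          rw [abs_of_pos h] at hsmall habs hsle
          rw [abs_of_neg h'] at habs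
          nlinarith [hdiff, abs_sub_abs_le_abs_sub (hyp a b i x) (hyp a b i x₀),
            neg_abs_le (hyp a b i x - hyp a b i x₀), le_abs_self (hyp a b i x - hyp a b i x₀)]
        · exfalso; rw [h'] at habs; simp at habs; linarith [abs_nonneg (hyp a b i x₀)]
        · exact h'
      have hclamp : clampR (hyp a b i x / s) = 1 := by
        apply clampR_of_one_le
        rw [le_div_iff₀ hs]
        rw [abs_of_pos h] at habs hsle
        rw [abs_of_pos hxpos] at habs
        nlinarith
      rw [hclamp, sign_pos h]; rfl
  · -- no active hyperplanes at x₀ : every coefficient works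
    refine ⟨1, one_pos, 1, one_pos, ?_⟩
    intro x hx s hs hss z
    apply subgrad_of_coeffs a b (fun i => clampR_abs_le _) ?_ z
    intro i hi
    exfalso
    exact hBne ⟨i, Finset.mem_filter.mpr ⟨Finset.mem_univ i, hi⟩⟩

lemma gap_continuous (σ : ι → SignType) : Continuous (gap a σ) := by
  unfold gap
  apply continuous_finset_sum
  intro i _
  apply Continuous.sub
  · exact (continuous_const.inner continuous_id).abs
  · exact (continuous_const.mul (continuous_const.inner continuous_id)).max continuous_const

lemma gap_zero_pattern (d : EuclideanSpace ℝ (Fin m)) :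
    gap a (fun _ => 0) d = hZ a d := by
  unfold gap hZ
  congr 1; funext i
  have h0 : (((0:SignType)):ℝ) * ⟪a i, d⟫ = 0 := by
    rw [show (((0:SignType)):ℝ) = 0 from rfl]; ring
  rw [h0, max_self]
  ring

lemma uMap_one_continuous : Continuous (fun x => uMap a b 1 x) := by
  unfold uMap
  apply continuous_finset_sum
  intro i _
  refine Continuous.smul (?_ : Continuous fun x => clampR (hyp a b i x / 1)) continuous_const
  exact continuous_clampR.comp ((hyp_continuous a b i).div_const 1)

end Stmt8


set_option maxHeartbeats 1000000
open Stmt8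

/-- The bounded complex of a finite affine hyperplane arrangement in `ℝ^m`
is contractible whenever it is non-empty. -/
theorem stmt_8 (ι : Type*) [Fintype ι] (m : ℕ)
    (a : ι → EuclideanSpace ℝ (Fin m)) (b : ι → ℝ) (ha : ∀ i, a i ≠ 0)
    (hne : (boundedComplex a b).Nonempty) :
    ContractibleSpace ↥(boundedComplex a b) := by
  classical
  rcases subsingleton_or_nontrivial (EuclideanSpace ℝ (Fin m)) with hs | hnt
  · have hns : Nonempty ↥(boundedComplex a b) := hne.to_subtype
    infer_instance
  · obtain ⟨x₀, hx₀⟩ := hne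
    set L : ℝ := ∑ i, ‖a i‖ with hLdef
    set Cb : ℝ := ∑ i, |b i| with hCbdef
    have hL0 : 0 ≤ L := Finset.sum_nonneg fun i _ => norm_nonneg _
    have hCb0 : 0 ≤ Cb := Finset.sum_nonneg fun i _ => abs_nonneg _
    -- B is bounded
    have hBbdd : Bornology.IsBounded (boundedComplex a b) := by
      have hsub : boundedComplex a b ⊆
          ⋃ σ ∈ {σ : ι → SignType | Bornology.IsBounded (arrFace a b σ)}, arrFace a b σ :=
        fun x hx => Set.mem_biUnion hx (mem_own_face a b x)
      apply Bornology.IsBounded.subset ?_ hsub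
      apply (Bornology.isBounded_biUnion (Set.toFinite _)).mpr
      intro σ hσ
      exact hσ
    obtain ⟨R₀, hR₀⟩ := isBounded_iff_forall_norm_le.mp hBbdd
    set R : ℝ := max R₀ 0 with hRdef
    have hRB : ∀ x ∈ boundedComplex a b, ‖x‖ ≤ R :=
      fun x hx => (hR₀ x hx).trans (le_max_left _ _)
    have hR0 : (0:ℝ) ≤ R := le_max_right _ _
    -- relevant sign vectors
    set T : Set (ι → SignType) :=
      {σ | (Bornology.IsBounded (arrFace a b σ) ∧ (arrFace a b σ).Nonempty)
        ∨ σ = fun _ => 0} with hTdef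
    have hTgap : ∀ σ ∈ T, ∀ d : EuclideanSpace ℝ (Fin m), ‖d‖ = 1 → 0 < gap a σ d := by
      intro σ hσ d hd
      rcases (gap_nonneg a σ d).lt_or_eq with h | h
      · exact h
      · exfalso
        have hcompat : compatDir a σ d := compatDir_of_gap_eq_zero a h.symm
        have hd0 : d ≠ 0 := by intro h0; rw [h0, norm_zero] at hd; norm_num at hd
        rcases hσ with ⟨hb, ⟨x, hxmem⟩⟩ | h0
        · exact not_bounded_of_compatDir a b hxmem hcompat hd0 hb
        · have hall : ∀ i, (⟪a i, d⟫:ℝ) = 0 := by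
            intro i
            apply (hcompat i).1
            rw [h0]
          have hcompat₀ : compatDir a (sgnv a b x₀) d := by
            intro i
            refine ⟨fun _ => hall i, fun _ => ?_⟩
            rw [hall i]; simp
          exact not_bounded_of_compatDir a b (mem_own_face a b x₀) hcompat₀ hd0 hx₀
    -- minimum of gap on the sphere for each relevant pattern
    have hmins : ∀ σ : ι → SignType,
        ∃ mσ : ℝ, σ ∈ T → (0 < mσ ∧ ∀ d, ‖d‖ = 1 → mσ ≤ gap a σ d) := by
      intro σ
      by_cases hσ : σ ∈ T
      · have hsne : (Metric.sphere (0:EuclideanSpace ℝ (Fin m)) 1).Nonempty :=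
          NormedSpace.sphere_nonempty.mpr zero_le_one
        obtain ⟨d₀, hd₀S, hd₀min⟩ := (isCompact_sphere (0:EuclideanSpace ℝ (Fin m)) 1).exists_isMinOn
          hsne (gap_continuous a σ).continuousOn
        refine ⟨gap a σ d₀, fun _ => ⟨hTgap σ hσ d₀
          (by rwa [Metric.mem_sphere, dist_zero_right] at hd₀S), ?_⟩⟩
        intro d hd
        exact hd₀min (by rw [Metric.mem_sphere, dist_zero_right]; exact hd)
      · exact ⟨1, fun h => absurd h hσ⟩
    choose mσfun hmσ using hmins
    set Tfin : Finset (ι → SignType) := Finset.univ.filter (fun σ => σ ∈ T) with hTfin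
    have hTne : (fun _ => (0:SignType)) ∈ Tfin := by
      rw [hTfin]
      exact Finset.mem_filter.mpr ⟨Finset.mem_univ _, Or.inr rfl⟩
    set mbar := Tfin.inf' ⟨_, hTne⟩ mσfun with hmbardef
    have hmbarpos : 0 < mbar := by
      rw [hmbardef]
      apply (Finset.lt_inf'_iff _).mpr
      intro σ hσ
      exact (hmσ σ ((Finset.mem_filter.mp hσ).2)).1
    have hmbar_le : ∀ σ ∈ T, ∀ d : EuclideanSpace ℝ (Fin m), ‖d‖ = 1 → mbar ≤ gap a σ d := by
      intro σ hσ d hd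
      calc mbar ≤ mσfun σ := by
            rw [hmbardef]
            exact Finset.inf'_le _ (Finset.mem_filter.mpr ⟨Finset.mem_univ _, hσ⟩)
      _ ≤ gap a σ d := (hmσ σ hσ).2 d hd
    have hgap_ge : ∀ σ ∈ T, ∀ d : EuclideanSpace ℝ (Fin m), mbar * ‖d‖ ≤ gap a σ d := by
      intro σ hσ d
      rcases eq_or_ne d 0 with rfl | hd0
      · have h0 : gap a σ (0:EuclideanSpace ℝ (Fin m)) = 0 := by
          unfold gap
          apply Finset.sum_eq_zero
          intro i _
          rw [inner_zero_right]
          simp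
        rw [h0, norm_zero, mul_zero]
      · have hdpos : 0 < ‖d‖ := norm_pos_iff.mpr hd0
        have hunit : ‖(‖d‖⁻¹ • d)‖ = 1 := by
          rw [norm_smul, Real.norm_eq_abs, abs_of_pos (inv_pos.mpr hdpos),
            inv_mul_cancel₀ hdpos.ne']
        have hle := hmbar_le σ hσ _ hunit
        have hsm : gap a σ d = ‖d‖ * gap a σ (‖d‖⁻¹ • d) := by
          rw [← gap_smul a σ _ hdpos.le, smul_smul, mul_inv_cancel₀ hdpos.ne', one_smul]
        rw [hsm]
        calc mbar * ‖d‖ = ‖d‖ * mbar := by ring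
        _ ≤ ‖d‖ * gap a σ (‖d‖⁻¹ • d) := mul_le_mul_of_nonneg_left hle hdpos.le
    have hmem_T : ∀ x ∈ boundedComplex a b, sgnv a b x ∈ T := by
      intro x hx
      rw [hTdef]
      simp only [Set.mem_setOf_eq]
      exact Or.inl ⟨hx, ⟨x, mem_own_face a b x⟩⟩
    have hmargin_u : ∀ x ∈ boundedComplex a b, ∀ s : ℝ, 0 < s →
        ∀ d, (⟪uMap a b s x, d⟫:ℝ) ≤ hZ a d - mbar * ‖d‖ := by
      intro x hx s hs d
      have h1 := uMap_inner_le a b x hs d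
      have h2 := hgap_ge _ (hmem_T x hx) d
      linarith
    have hmargin_0 : ∀ d, (⟪(0:EuclideanSpace ℝ (Fin m)), d⟫:ℝ) ≤ hZ a d - mbar * ‖d‖ := by
      intro d
      rw [inner_zero_left]
      have h2 := hgap_ge _ (Or.inr rfl) d
      rw [gap_zero_pattern] at h2
      linarith
    have hmargin_comb : ∀ y : EuclideanSpace ℝ (Fin m),
        (∀ d, (⟪y,d⟫:ℝ) ≤ hZ a d - mbar * ‖d‖) → ∀ t : ℝ, 0 ≤ t → t ≤ 1 →
        ∀ d, (⟪(1 - t) • y, d⟫:ℝ) ≤ hZ a d - mbar * ‖d‖ := by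
      intro y hy t ht0 ht1 d
      rw [real_inner_smul_left]
      have h0 := hmargin_0 d
      rw [inner_zero_left] at h0
      nlinarith [hy d, mul_le_mul_of_nonneg_left (hy d) (by linarith : (0:ℝ) ≤ 1 - t)]
    -- choice of μ
    set C₂ : ℝ := 2 * (L * R + 2 * Cb + L * R) + 1 with hC₂def
    have hC₂pos : 0 < C₂ := by
      have := mul_nonneg hL0 hR0
      rw [hC₂def]; nlinarith
    set μ : ℝ := min 1 (mbar^2 / (4 * C₂)) with hμdef
    have hμpos : 0 < μ := lt_min one_pos (by positivity)
    -- uniform bound on the prox displacement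
    have hPwkey : ∀ y w : EuclideanSpace ℝ (Fin m),
        (∀ d, (⟪y,d⟫:ℝ) ≤ hZ a d - mbar * ‖d‖) → ‖y‖ ≤ L → ‖w‖ ≤ R →
        ∀ P, (∀ z, proxFun (fA a b) μ y w P ≤ proxFun (fA a b) μ y w z) →
        μ * ‖P - w‖ ≤ mbar / 2 := by
      intro y w hm hyL hwR P hP
      have hb := prox_dist_bound a b μ hμpos mbar hmbarpos.le y w P hm hP
      have h1 : μ * ‖P - w‖^2 ≤ C₂ := by
        have e1 : (∑ i, ‖a i‖) * ‖w‖ ≤ L * R := by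
          rw [← hLdef]
          exact mul_le_mul_of_nonneg_left hwR hL0
        have e2 : ‖y‖ * ‖w‖ ≤ L * R :=
          mul_le_mul hyL hwR (norm_nonneg w) hL0
        rw [hC₂def]
        rw [← hCbdef] at hb
        nlinarith [hb]
      have h4 : μ ≤ mbar^2/(4*C₂) := min_le_right _ _
      have h5 : μ * C₂ ≤ mbar^2/4 := by
        have h6 := mul_le_mul_of_nonneg_right h4 hC₂pos.le
        have h7 : mbar^2/(4*C₂) * C₂ = mbar^2/4 := by field_simp
        rw [h7] at h6
        exact h6
      have h2 : (μ * ‖P - w‖)^2 ≤ mbar^2 / 4 := by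
        have he : (μ * ‖P - w‖)^2 = μ * (μ * ‖P - w‖^2) := by ring
        rw [he]
        have h3 : μ * (μ * ‖P-w‖^2) ≤ μ * C₂ := mul_le_mul_of_nonneg_left h1 hμpos.le
        exact h3.trans h5
      have h6 : 0 ≤ μ * ‖P - w‖ := mul_nonneg hμpos.le (norm_nonneg _)
      nlinarith [h2, h6, hmbarpos, sq_nonneg (μ * ‖P - w‖ - mbar/2)]
    -- the prox map
    have hEU : ∀ y w : EuclideanSpace ℝ (Fin m),
        ∃! P, ∀ z, proxFun (fA a b) μ y w P ≤ proxFun (fA a b) μ y w z :=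
      fun y w => proxFun_exists_unique (fA a b) μ hμpos (fA_nonneg a b)
        (fA_continuous a b) (fA_midpoint a b) y w
    choose S hS using fun y w => (hEU y w).exists
    have hSuniq : ∀ y w Q, (∀ z, proxFun (fA a b) μ y w Q ≤ proxFun (fA a b) μ y w z) →
        Q = S y w := fun y w Q hQ => (hEU y w).unique hQ (hS y w)
    have hSlip : ∀ y w y' w',
        ‖S y w - S y' w'‖ ≤ (2/μ) * ‖y - y'‖ + 2 * ‖w - w'‖ :=
      fun y w y' w' => proxFun_lipschitz (fA a b) μ hμpos (fA_midpoint a b)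
        y w y' w' _ _ (hS y w) (hS y' w')
    have hScont : Continuous (fun p : EuclideanSpace ℝ (Fin m) × EuclideanSpace ℝ (Fin m) =>
        S p.1 p.2) := by
      rw [Metric.continuous_iff]
      intro p ε hε
      have hc : (0:ℝ) < 2/μ + 3 := by positivity
      refine ⟨ε / (2/μ + 3), by positivity, ?_⟩
      intro q hq
      rw [dist_eq_norm]
      have h1 : dist q.1 p.1 ≤ dist q p := by
        rw [Prod.dist_eq]; exact le_max_left _ _
      have h2 : dist q.2 p.2 ≤ dist q p := by
        rw [Prod.dist_eq]; exact le_max_right _ _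
      rw [dist_eq_norm] at h1 h2
      have h3 := hSlip q.1 q.2 p.1 p.2
      have h4 : (0:ℝ) ≤ 2/μ := by positivity
      have hdist0 : (0:ℝ) ≤ dist q p := dist_nonneg
      have h8 : (2/μ + 2) * (ε / (2/μ + 3)) < ε := by
        rw [mul_comm, div_mul_eq_mul_div, div_lt_iff₀ hc]
        nlinarith [hε]
      have h9 : (0:ℝ) < 2/μ + 2 := by positivity
      calc ‖S q.1 q.2 - S p.1 p.2‖ ≤ (2/μ) * ‖q.1 - p.1‖ + 2 * ‖q.2 - p.2‖ := h3
      _ ≤ (2/μ + 2) * dist q p := by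
          have h10 := mul_le_mul_of_nonneg_left h1 h4
          nlinarith [h2]
      _ < (2/μ + 2) * (ε / (2/μ + 3)) := mul_lt_mul_of_pos_left hq h9
      _ < ε := h8
    -- Phase-1 map
    set Kmap : ℝ × EuclideanSpace ℝ (Fin m) → EuclideanSpace ℝ (Fin m) :=
      fun p => if 0 < p.1 then S (uMap a b p.1 p.2) p.2 else p.2 with hKdef
    have hKmem : ∀ t : ℝ, ∀ x, x ∈ boundedComplex a b → Kmap (t, x) ∈ boundedComplex a b := by
      intro t x hx
      rw [hKdef]
      by_cases ht : 0 < t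
      · simp only [if_pos ht]
        have hmarg := hmargin_u x hx t ht
        have hyL : ‖uMap a b t x‖ ≤ L := uMap_norm_le a b x t
        have hwR : ‖x‖ ≤ R := hRB x hx
        exact prox_mem_boundedComplex a b μ hμpos mbar hmbarpos _ _ _
          hmarg (hPwkey _ _ hmarg hyL hwR _ (hS _ _)) (hS _ _)
      · simp only [if_neg ht]; exact hx
    have hKcont : Continuous Kmap := by
      rw [continuous_iff_continuousAt]
      rintro ⟨t, x⟩
      rcases lt_trichotomy t 0 with ht | ht | ht
      · -- locally the identity in the second variable
        have hopen : IsOpen {p : ℝ × EuclideanSpace ℝ (Fin m) | p.1 < 0} :=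
          isOpen_lt continuous_fst continuous_const
        apply ContinuousAt.congr (continuous_snd.continuousAt)
        apply Filter.eventuallyEq_of_mem (hopen.mem_nhds ht)
        intro p hp
        rw [hKdef]
        simp only []
        rw [if_neg (not_lt.mpr (le_of_lt (show p.1 < 0 from hp)))]
      · -- t = 0 : metric estimate via the locality lemma
        subst ht
        obtain ⟨r, hr, s₀, hs₀, hloc⟩ := uMap_subgrad_near a b x
        rw [Metric.continuousAt_iff]
        intro ε hε
        refine ⟨min (min r s₀) (ε/3), by positivity, ?_⟩
        intro q hq
        have hq1d : dist q.1 (0:ℝ) < min (min r s₀) (ε/3) :=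
          lt_of_le_of_lt (by rw [Prod.dist_eq]; exact le_max_left _ _) hq
        have hq2d : dist q.2 x < min (min r s₀) (ε/3) :=
          lt_of_le_of_lt (by rw [Prod.dist_eq]; exact le_max_right _ _) hq
        have hKval0 : Kmap (0, x) = x := by rw [hKdef]; simp
        rw [hKval0]
        by_cases hq1 : 0 < q.1
        · have hq1s : q.1 < s₀ := by
            have := hq1d
            rw [dist_eq_norm, sub_zero, Real.norm_eq_abs, abs_of_pos hq1] at this
            exact lt_of_lt_of_le this ((min_le_left _ _).trans (min_le_right _ _))
          have hq2r : ‖q.2 - x‖ < r := by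
            have := hq2d
            rw [dist_eq_norm] at this
            exact lt_of_lt_of_le this ((min_le_left _ _).trans (min_le_left _ _))
          have hsub := hloc q.2 hq2r q.1 hq1 hq1s
          have hmin := prox_min_at_subgrad a b μ hμpos (uMap a b q.1 q.2) x hsub
          have hfix : x = S (uMap a b q.1 q.2) x := hSuniq _ _ x hmin
          have hKval : Kmap q = S (uMap a b q.1 q.2) q.2 := by
            rw [hKdef]; simp only []; rw [if_pos hq1]
          rw [hKval, dist_eq_norm]
          have hlip := hSlip (uMap a b q.1 q.2) q.2 (uMap a b q.1 q.2) x
          rw [sub_self, norm_zero, mul_zero, zero_add] at hlip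
          have hq2e : ‖q.2 - x‖ < ε/3 := by
            have := hq2d
            rw [dist_eq_norm] at this
            exact lt_of_lt_of_le this (min_le_right _ _)
          calc ‖S (uMap a b q.1 q.2) q.2 - x‖
              = ‖S (uMap a b q.1 q.2) q.2 - S (uMap a b q.1 q.2) x‖ := by rw [← hfix]
          _ ≤ 2 * ‖q.2 - x‖ := hlip
          _ < ε := by linarith
        · have hKval : Kmap q = q.2 := by
            rw [hKdef]; simp only []; rw [if_neg hq1]
          rw [hKval]
          calc dist q.2 x < min (min r s₀) (ε/3) := hq2d
          _ ≤ ε/3 := min_le_right _ _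
          _ < ε := by linarith
      · -- t > 0 : composition of continuous maps
        have hopen : IsOpen {p : ℝ × EuclideanSpace ℝ (Fin m) | 0 < p.1} :=
          isOpen_lt continuous_const continuous_fst
        have hUcont : ContinuousAt (fun p : ℝ × EuclideanSpace ℝ (Fin m) =>
            uMap a b p.1 p.2) (t, x) := by
          have : ∀ i : ι, ContinuousAt (fun p : ℝ × EuclideanSpace ℝ (Fin m) =>
              clampR (hyp a b i p.2 / p.1) • a i) (t, x) := by
            intro i
            refine ContinuousAt.smul (?_ : ContinuousAt (fun p : ℝ × EuclideanSpace ℝ (Fin m) => clampR (hyp a b i p.2 / p.1)) (t, x)) continuousAt_const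
            apply continuous_clampR.continuousAt.comp
            exact (((hyp_continuous a b i).comp continuous_snd).continuousAt).div
              continuous_fst.continuousAt (ne_of_gt ht)
          exact tendsto_finset_sum _ (fun i _ => this i)
        have hcomp : ContinuousAt (fun p : ℝ × EuclideanSpace ℝ (Fin m) =>
            S (uMap a b p.1 p.2) p.2) (t, x) :=
          hScont.continuousAt.comp (hUcont.prodMk continuous_snd.continuousAt)
        apply ContinuousAt.congr hcomp
        apply Filter.eventuallyEq_of_mem (hopen.mem_nhds ht)
        intro p hp
        rw [hKdef]
        simp only []
        rw [if_pos (show 0 < p.1 from hp)]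
    -- Phase-2 map
    set Lmap : ℝ × EuclideanSpace ℝ (Fin m) → EuclideanSpace ℝ (Fin m) :=
      fun p => S ((1 - p.1) • uMap a b 1 p.2) ((1 - p.1) • p.2 + p.1 • x₀) with hLmdef
    have hLcont : Continuous Lmap := by
      rw [hLmdef]
      have hy : Continuous (fun p : ℝ × EuclideanSpace ℝ (Fin m) =>
          (1 - p.1) • uMap a b 1 p.2) :=
        (continuous_const.sub continuous_fst).smul
          ((uMap_one_continuous a b).comp continuous_snd)
      have hw : Continuous (fun p : ℝ × EuclideanSpace ℝ (Fin m) =>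
          (1 - p.1) • p.2 + p.1 • x₀) :=
        ((continuous_const.sub continuous_fst).smul continuous_snd).add
          (continuous_fst.smul continuous_const)
      exact hScont.comp (hy.prodMk hw)
    have hLmem : ∀ t x, 0 ≤ t → t ≤ 1 → x ∈ boundedComplex a b →
        Lmap (t, x) ∈ boundedComplex a b := by
      intro t x ht0 ht1 hx
      have hmarg := hmargin_comb _ (hmargin_u x hx 1 one_pos) t ht0 ht1
      have hyL : ‖(1-t) • uMap a b 1 x‖ ≤ L := by
        rw [norm_smul, Real.norm_eq_abs, abs_of_nonneg (by linarith : (0:ℝ) ≤ 1 - t)]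
        have h1 := uMap_norm_le a b x 1
        rw [← hLdef] at h1
        nlinarith [norm_nonneg (uMap a b 1 x)]
      have hwR : ‖(1-t) • x + t • x₀‖ ≤ R := by
        have h1 : ‖(1-t) • x + t • x₀‖ ≤ ‖(1-t) • x‖ + ‖t • x₀‖ := norm_add_le _ _
        rw [norm_smul, norm_smul, Real.norm_eq_abs, Real.norm_eq_abs,
          abs_of_nonneg (by linarith : (0:ℝ) ≤ 1 - t), abs_of_nonneg ht0] at h1
        have h2 := hRB x hx
        have h3 := hRB x₀ hx₀
        nlinarith [norm_nonneg x, norm_nonneg x₀]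
      exact prox_mem_boundedComplex a b μ hμpos mbar hmbarpos _ _ _
        hmarg (hPwkey _ _ hmarg hyL hwR _ (hS _ _)) (hS _ _)
    -- endpoints
    have hK1L0 : ∀ x : EuclideanSpace ℝ (Fin m), Kmap (1, x) = Lmap (0, x) := by
      intro x
      rw [hKdef, hLmdef]
      simp only []
      rw [if_pos one_pos]
      norm_num
    set zstar : EuclideanSpace ℝ (Fin m) := S 0 x₀ with hzsdef
    have hzmem : zstar ∈ boundedComplex a b := by
      rw [hzsdef]
      have hyL : ‖(0:EuclideanSpace ℝ (Fin m))‖ ≤ L := by rw [norm_zero]; exact hL0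
      exact prox_mem_boundedComplex a b μ hμpos mbar hmbarpos _ _ _
        hmargin_0 (hPwkey _ _ hmargin_0 hyL (hRB x₀ hx₀) _ (hS _ _)) (hS _ _)
    have hL1 : ∀ x : EuclideanSpace ℝ (Fin m), Lmap (1, x) = zstar := by
      intro x
      rw [hLmdef, hzsdef]
      norm_num
    -- homotopies inside the subtype
    let g1 : C(↥(boundedComplex a b), ↥(boundedComplex a b)) :=
      ⟨fun x => ⟨Kmap (1, ↑x), hKmem 1 ↑x x.2⟩, by
        apply Continuous.subtype_mk
        exact hKcont.comp (continuous_const.prodMk continuous_subtype_val)⟩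
    have H1 : (ContinuousMap.id ↥(boundedComplex a b)).Homotopic g1 := by
      refine ⟨⟨⟨fun q => ⟨Kmap (↑q.1, ↑q.2), hKmem _ _ q.2.2⟩, ?_⟩, ?_, ?_⟩⟩
      · apply Continuous.subtype_mk
        exact hKcont.comp ((continuous_subtype_val.comp continuous_fst).prodMk
          (continuous_subtype_val.comp continuous_snd))
      · intro x
        apply Subtype.ext
        show Kmap (((0:unitInterval):ℝ), ↑x) = ↑x
        rw [show ((0:unitInterval):ℝ) = 0 from rfl, hKdef]
        simp
      · intro x
        apply Subtype.ext
        show Kmap (((1:unitInterval):ℝ), ↑x) = Kmap (1, ↑x)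
        rw [show ((1:unitInterval):ℝ) = 1 from rfl]
    have H2 : g1.Homotopic (ContinuousMap.const ↥(boundedComplex a b) ⟨zstar, hzmem⟩) := by
      refine ⟨⟨⟨fun q => ⟨Lmap (↑q.1, ↑q.2), hLmem _ _ q.1.2.1 q.1.2.2 q.2.2⟩, ?_⟩, ?_, ?_⟩⟩
      · apply Continuous.subtype_mk
        exact hLcont.comp ((continuous_subtype_val.comp continuous_fst).prodMk
          (continuous_subtype_val.comp continuous_snd))
      · intro x
        apply Subtype.ext
        show Lmap (((0:unitInterval):ℝ), ↑x) = Kmap (1, ↑x)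
        rw [show ((0:unitInterval):ℝ) = 0 from rfl, ← hK1L0]
      · intro x
        apply Subtype.ext
        show Lmap (((1:unitInterval):ℝ), ↑x) = zstar
        rw [show ((1:unitInterval):ℝ) = 1 from rfl, hL1]
    have hnull : (ContinuousMap.id ↥(boundedComplex a b)).Nullhomotopic :=
      ⟨⟨zstar, hzmem⟩, H1.trans H2⟩
    exact (contractible_iff_id_nullhomotopic _).mpr hnull
end

section
/- Let F_i, F_j be top-dimensional bounded regions of a generic affine hyperplane arrangement in ℝ^m, let σ_{ij} = closure(F_i) ∩ closure(F_j), and define Ψ(F) = Σ_{v ∈ ∂F} Ψ(v), where for each vertex v of ∂F, Ψ(v) is the oriented (m−1)-simplex of the nerve (independence complex) N spanned by the m hyperplanes through v, oriented by the inward normals of F. Then ⟨Ψ(F_i), Ψ(F_j)⟩ = (−1)^{m − dim σ_{ij}} · (number of vertices of σ_{ij}), where ⟨·,·⟩ is the inner product on C_{m−1}(N; ℝ) making oriented simplices orthonormal. -/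
open scoped RealInnerProductSpace

open Classical in
/-- The nerve chain `Ψ(F) = Σ_{v ∈ ∂F} Ψ(v) ∈ C_{m-1}(N; ℝ)` of the region `F` with sign
vector `φ`: a chain on the `(m-1)`-simplices of the independence complex `N` (an
`(m-1)`-simplex being a set `S` of `m` hyperplanes meeting in a vertex), whose coefficient
on `S` is `±1` if the vertex cut out by `S` lies on `∂F` — the sign comparing the
orientation given by the ordered inward normals `(φ_{i_1} a_{i_1}, …, φ_{i_m} a_{i_m})`,
`i_1 < ⋯ < i_m ∈ S`, of `F` at that vertex with the standard orientation of `ℝ^m` — and `0`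
otherwise. -/
noncomputable def PsiChain {s : ℕ} {m : ℕ} (a : Fin s → EuclideanSpace ℝ (Fin m))
    (b : Fin s → ℝ) (φ : Fin s → SignType) : Finset (Fin s) → ℝ := fun S =>
  if hS : S.card = m then
    if ∃ x ∈ closure (arrFace a b φ), {i | ⟪a i, x⟫ = b i} = (↑S : Set (Fin s)) then
      ((SignType.sign (Matrix.det
        (Matrix.of fun p q : Fin m => ((φ (S.orderIsoOfFin hS p) : ℝ) •
          a (S.orderIsoOfFin hS p)) q)) : ℤ) : ℝ)
    else 0
  else 0

section AuxLemmas

variable {s m : ℕ}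

def toEuc {m : ℕ} (u : Fin m → ℝ) : EuclideanSpace ℝ (Fin m) := WithLp.toLp 2 u

@[simp] lemma toEuc_apply {m : ℕ} (u : Fin m → ℝ) (q : Fin m) : toEuc u q = u q := rfl

lemma inner_eq_sum {m : ℕ} (v x : EuclideanSpace ℝ (Fin m)) : ⟪v, x⟫ = ∑ q, v q * x q := by
  simp [PiLp.inner_apply, RCLike.inner_apply, mul_comm]

def Pset (a : Fin s → EuclideanSpace ℝ (Fin m)) (b : Fin s → ℝ) (φ : Fin s → SignType) :
    Set (EuclideanSpace ℝ (Fin m)) :=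
  {x | ∀ i, 0 ≤ (φ i : ℝ) * (⟪a i, x⟫ - b i)}

lemma sign_eq_iff' {c : SignType} (hc : c ≠ 0) (r : ℝ) :
    SignType.sign r = c ↔ 0 < (c : ℝ) * r := by
  cases c with
  | zero => exact absurd rfl hc
  | pos =>
      have h1 : ((SignType.pos : SignType) : ℝ) = 1 := rfl
      rw [h1, one_mul]
      exact sign_eq_one_iff
  | neg =>
      have h1 : ((SignType.neg : SignType) : ℝ) = -1 := rfl
      rw [h1]
      constructor
      · intro h; have := sign_eq_neg_one_iff.1 h; nlinarith
      · intro h; exact sign_eq_neg_one_iff.2 (by nlinarith)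

lemma signCast_ne_zero {c : SignType} (hc : c ≠ 0) : (c : ℝ) ≠ 0 := by
  cases c with
  | zero => exact absurd rfl hc
  | pos => norm_num [show ((SignType.pos : SignType) : ℝ) = 1 from rfl]
  | neg => norm_num [show ((SignType.neg : SignType) : ℝ) = -1 from rfl]

lemma signCast_opp {c₁ c₂ : SignType} (h₁ : c₁ ≠ 0) (h₂ : c₂ ≠ 0) (h : c₁ ≠ c₂) :
    (c₂ : ℝ) = -(c₁ : ℝ) := by
  cases c₁ <;> cases c₂ <;> simp_all

lemma signType_cast_mul (c₁ c₂ : SignType) (h₁ : c₁ ≠ 0) (h₂ : c₂ ≠ 0) :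
    (c₁ : ℝ) * (c₂ : ℝ) = if c₁ ≠ c₂ then -1 else 1 := by
  cases c₁ <;> cases c₂ <;> simp_all

lemma signCast_sq {c : SignType} (hc : c ≠ 0) : (c : ℝ) * (c : ℝ) = 1 := by
  cases c with
  | zero => exact absurd rfl hc
  | pos => norm_num [show ((SignType.pos : SignType) : ℝ) = 1 from rfl]
  | neg => norm_num [show ((SignType.neg : SignType) : ℝ) = -1 from rfl]

lemma signCast_abs {c : SignType} (hc : c ≠ 0) : |(c : ℝ)| = 1 := by
  cases c with
  | zero => exact absurd rfl hc
  | pos => norm_num [show ((SignType.pos : SignType) : ℝ) = 1 from rfl]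
  | neg => norm_num [show ((SignType.neg : SignType) : ℝ) = -1 from rfl]

lemma signCast_mul_signCast {d₁ d₂ e : ℝ} {k : ℕ} (h : d₁ * d₂ = (-1) ^ k * e) (he : 0 < e) :
    ((SignType.sign d₁ : ℤ) : ℝ) * ((SignType.sign d₂ : ℤ) : ℝ) = (-1) ^ k := by
  rcases Nat.even_or_odd k with hk | hk
  · rw [hk.neg_one_pow] at h ⊢
    rw [one_mul] at h
    rcases lt_trichotomy d₁ 0 with h1 | h1 | h1
    · have h2 : d₂ < 0 := by nlinarith
      rw [sign_neg h1, sign_neg h2]; norm_num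
    · exfalso; rw [h1, zero_mul] at h; linarith
    · have h2 : 0 < d₂ := by nlinarith
      rw [sign_pos h1, sign_pos h2]; norm_num
  · rw [hk.neg_one_pow] at h ⊢
    have h' : d₁ * d₂ = -e := by linarith
    rcases lt_trichotomy d₁ 0 with h1 | h1 | h1
    · have h2 : 0 < d₂ := by nlinarith
      rw [sign_neg h1, sign_pos h2]; norm_num
    · exfalso; rw [h1, zero_mul] at h'; linarith
    · have h2 : d₂ < 0 := by nlinarith
      rw [sign_pos h1, sign_neg h2]; norm_num

lemma exists_pos_mul_lt' {ι : Type*} [Fintype ι] {c : ι → ℝ} (hc : ∀ i, 0 < c i) (d : ι → ℝ) :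
    ∃ ε > 0, ∀ i, ε * d i < c i := by
  cases isEmpty_or_nonempty ι with
  | inl h => exact ⟨1, one_pos, fun i => (IsEmpty.false i).elim⟩
  | inr h =>
    set f : ι → ℝ := fun i => c i / (|d i| + 1) with hf
    set ε := (Finset.univ.inf' Finset.univ_nonempty f) / 2 with hε
    have hpos : 0 < ε := by
      apply div_pos _ two_pos
      rw [Finset.lt_inf'_iff]
      intro i _
      exact div_pos (hc i) (by positivity)
    refine ⟨ε, hpos, fun i => ?_⟩
    have h1 : ε ≤ f i / 2 := by
      have := Finset.inf'_le f (Finset.mem_univ i)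
      rw [hε]; linarith
    have h2 : (0:ℝ) < |d i| + 1 := by positivity
    have h3 : f i * (|d i| + 1) = c i := by rw [hf]; field_simp
    have h4 : ε * d i ≤ ε * |d i| := by nlinarith [le_abs_self (d i), hpos.le]
    nlinarith [abs_nonneg (d i), hc i]

lemma closure_arrFace (a : Fin s → EuclideanSpace ℝ (Fin m)) (b : Fin s → ℝ)
    (φ : Fin s → SignType) (hφ : ∀ i, φ i ≠ 0) (hne : (arrFace a b φ).Nonempty) :
    closure (arrFace a b φ) = Pset a b φ := by
  apply subset_antisymm
  · apply closure_minimal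
    · intro x hx i
      have := (sign_eq_iff' (hφ i) _).1 (hx i)
      linarith
    · have hP : Pset a b φ = ⋂ i, {x : EuclideanSpace ℝ (Fin m) |
          0 ≤ (φ i : ℝ) * (⟪a i, x⟫ - b i)} := by
        ext x; simp [Pset, Set.mem_iInter]
      rw [hP]
      refine isClosed_iInter fun i => isClosed_le continuous_const ?_
      exact continuous_const.mul ((continuous_const.inner continuous_id).sub continuous_const)
  · intro x hx
    obtain ⟨y, hy⟩ := hne
    have hmem : ∀ n : ℕ, x + ((1:ℝ)/(n+1)) • (y - x) ∈ arrFace a b φ := by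
      intro n i
      rw [sign_eq_iff' (hφ i)]
      have hy' := (sign_eq_iff' (hφ i) _).1 (hy i)
      have hx' := hx i
      have ht : 0 < (1:ℝ)/(n+1) := by positivity
      have ht1 : (1:ℝ)/(n+1) ≤ 1 := by
        rw [div_le_one (by positivity)]; linarith [Nat.cast_nonneg (α := ℝ) n]
      have expand : ⟪a i, x + ((1:ℝ)/(n+1)) • (y - x)⟫
          = ⟪a i, x⟫ + ((1:ℝ)/(n+1)) * (⟪a i, y⟫ - ⟪a i, x⟫) := by
        rw [inner_add_right, real_inner_smul_right, inner_sub_right]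
      rw [expand]
      nlinarith [hx', hy', ht, ht1]
    have htend : Filter.Tendsto (fun n : ℕ => x + ((1:ℝ)/(n+1)) • (y - x))
        Filter.atTop (nhds x) := by
      have h0 := tendsto_one_div_add_atTop_nhds_zero_nat (𝕜 := ℝ)
      have h1 := h0.smul_const (y - x)
      have h2 := (tendsto_const_nhds (x := x) (f := Filter.atTop (α := ℕ))).add h1
      simpa using h2
    exact mem_closure_of_tendsto htend (Filter.Eventually.of_forall hmem)


lemma det_ne_zero_of_vertex (a : Fin s → EuclideanSpace ℝ (Fin m)) (b : Fin s → ℝ)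
    (φ : Fin s → SignType)
    (hbd : Bornology.IsBounded (arrFace a b φ))
    (hgen : ∀ x : EuclideanSpace ℝ (Fin m), ({i | ⟪a i, x⟫ = b i} : Set (Fin s)).ncard ≤ m)
    {x : EuclideanSpace ℝ (Fin m)} (hx : x ∈ closure (arrFace a b φ))
    {S : Finset (Fin s)} (hcard : S.card = m)
    (hSx : {i | ⟪a i, x⟫ = b i} = (↑S : Set (Fin s))) :
    (Matrix.of fun p q : Fin m => a (S.orderIsoOfFin hcard p) q).det ≠ 0 := by
  intro hdet
  obtain ⟨u, hu0, hAu⟩ := Matrix.exists_mulVec_eq_zero_iff.2 hdet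
  have hinner : ∀ i ∈ S, ⟪a i, toEuc u⟫ = 0 := by
    intro i hi
    have hip : ((S.orderIsoOfFin hcard) ((S.orderIsoOfFin hcard).symm ⟨i, hi⟩) : Fin s) = i := by
      simp
    have h2 := congrFun hAu ((S.orderIsoOfFin hcard).symm ⟨i, hi⟩)
    simp only [Matrix.mulVec, dotProduct, Matrix.of_apply, Pi.zero_apply] at h2
    rw [hip] at h2
    rw [inner_eq_sum]
    exact h2
  by_cases hall : ∀ j, ⟪a j, toEuc u⟫ = 0
  · -- translation invariance contradicts boundedness
    have hmap : ∀ t : ℝ, ∀ z ∈ closure (arrFace a b φ),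
        z + t • toEuc u ∈ closure (arrFace a b φ) := by
      intro t z hz
      have himg : ∀ w ∈ arrFace a b φ, w + t • toEuc u ∈ arrFace a b φ := by
        intro w hw i
        have hsame : ⟪a i, w + t • toEuc u⟫ = ⟪a i, w⟫ := by
          rw [inner_add_right, real_inner_smul_right, hall i, mul_zero, add_zero]
        show SignType.sign (⟪a i, w + t • toEuc u⟫ - b i) = φ i
        rw [hsame]; exact hw i
      have hcont : Continuous fun w : EuclideanSpace ℝ (Fin m) => w + t • toEuc u := by
        continuity
      have hsub : closure (arrFace a b φ)
          ⊆ (fun w => w + t • toEuc u) ⁻¹' closure (arrFace a b φ) :=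
        closure_minimal (fun w hw => subset_closure (himg w hw))
          (IsClosed.preimage hcont isClosed_closure)
      exact hsub hz
    obtain ⟨R, hR⟩ := (hbd.closure).subset_closedBall 0
    have hxR : ‖x‖ ≤ R := by
      have := hR hx
      rwa [Metric.mem_closedBall, dist_zero_right] at this
    have hune : toEuc u ≠ 0 := fun h => hu0 (by simpa [toEuc] using congrArg WithLp.ofLp h)
    have hun : 0 < ‖toEuc u‖ := norm_pos_iff.2 hune
    set t := (R + ‖x‖ + 1) / ‖toEuc u‖ with htdef
    have hz := hmap t x hx
    have hzb := hR hz
    rw [Metric.mem_closedBall, dist_zero_right] at hzb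
    have h1 : ‖t • toEuc u‖ = ‖x + t • toEuc u - x‖ := by congr 1; abel
    have h2 : ‖x + t • toEuc u - x‖ ≤ ‖x + t • toEuc u‖ + ‖x‖ := norm_sub_le _ _
    have h3 : ‖t • toEuc u‖ = |t| * ‖toEuc u‖ := norm_smul _ _
    have ht0 : 0 ≤ t := div_nonneg (by linarith [norm_nonneg x]) hun.le
    have h4 : |t| = t := abs_of_nonneg ht0
    have h5 : t * ‖toEuc u‖ = R + ‖x‖ + 1 := by
      rw [htdef]; field_simp
    nlinarith
  · push_neg at hall
    obtain ⟨j, hj⟩ := hall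
    have hjS : j ∉ S := fun h => hj (hinner j h)
    set r := (b j - ⟪a j, x⟫) / ⟪a j, toEuc u⟫ with hrdef
    set w := x + r • toEuc u with hwdef
    have hmemx : ∀ i ∈ S, ⟪a i, x⟫ = b i := by
      intro i hi
      have : i ∈ {i | ⟪a i, x⟫ = b i} := by rw [hSx]; exact_mod_cast hi
      exact this
    have hSw : ∀ i ∈ S, ⟪a i, w⟫ = b i := by
      intro i hi
      rw [hwdef, inner_add_right, real_inner_smul_right, hinner i hi, mul_zero, add_zero]
      exact hmemx i hi
    have hjw : ⟪a j, w⟫ = b j := by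
      rw [hwdef, inner_add_right, real_inner_smul_right, hrdef,
        div_mul_cancel₀ _ hj]
      ring
    have hsub : (↑(insert j S) : Set (Fin s)) ⊆ {i | ⟪a i, w⟫ = b i} := by
      intro i hi
      simp only [Finset.coe_insert, Set.mem_insert_iff, Finset.mem_coe] at hi
      rcases hi with rfl | hi
      · exact hjw
      · exact hSw i hi
    have hbig : (m + 1 : ℕ) ≤ ({i | ⟪a i, w⟫ = b i} : Set (Fin s)).ncard := by
      calc (m + 1 : ℕ) = (insert j S).card := by
            rw [Finset.card_insert_of_notMem hjS, hcard]
        _ = ((↑(insert j S) : Set (Fin s))).ncard := (Set.ncard_coe_finset _).symm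
        _ ≤ _ := Set.ncard_le_ncard hsub (Set.toFinite _)
    have := hgen w
    omega

lemma eq_of_eqset (a : Fin s → EuclideanSpace ℝ (Fin m)) (b : Fin s → ℝ)
    {S : Finset (Fin s)} (hcard : S.card = m)
    (hdet : (Matrix.of fun p q : Fin m => a (S.orderIsoOfFin hcard p) q).det ≠ 0)
    {x y : EuclideanSpace ℝ (Fin m)}
    (hx : {i | ⟪a i, x⟫ = b i} = (↑S : Set (Fin s)))
    (hy : {i | ⟪a i, y⟫ = b i} = (↑S : Set (Fin s))) : x = y := by
  by_contra hne
  apply hdet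
  apply Matrix.exists_mulVec_eq_zero_iff.1
  refine ⟨fun q => x q - y q, ?_, ?_⟩
  · intro h0
    apply hne
    ext q
    have := congrFun h0 q
    simpa [sub_eq_zero] using this
  · funext p
    have hxi : ⟪a ((S.orderIsoOfFin hcard) p : Fin s), x⟫ = b ((S.orderIsoOfFin hcard) p : Fin s) := by
      have : ((S.orderIsoOfFin hcard) p : Fin s) ∈ {i | ⟪a i, x⟫ = b i} := by
        rw [hx]; exact_mod_cast (S.orderIsoOfFin hcard p).2
      exact this
    have hyi : ⟪a ((S.orderIsoOfFin hcard) p : Fin s), y⟫ = b ((S.orderIsoOfFin hcard) p : Fin s) := by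
      have : ((S.orderIsoOfFin hcard) p : Fin s) ∈ {i | ⟪a i, y⟫ = b i} := by
        rw [hy]; exact_mod_cast (S.orderIsoOfFin hcard p).2
      exact this
    have hx' := (inner_eq_sum (a ((S.orderIsoOfFin hcard) p : Fin s)) x).symm.trans hxi
    have hy' := (inner_eq_sum (a ((S.orderIsoOfFin hcard) p : Fin s)) y).symm.trans hyi
    simp only [Matrix.mulVec, dotProduct, Matrix.of_apply, mul_sub,
      Finset.sum_sub_distrib, Pi.zero_apply]
    rw [hx', hy', sub_self]


lemma dim_sigma (a : Fin s → EuclideanSpace ℝ (Fin m)) (b : Fin s → ℝ)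
    (φ₁ φ₂ : Fin s → SignType) (hφ₁0 : ∀ i, φ₁ i ≠ 0) (hφ₂0 : ∀ i, φ₂ i ≠ 0)
    (hφ₁ne : (arrFace a b φ₁).Nonempty) (hφ₂ne : (arrFace a b φ₂).Nonempty)
    {v : EuclideanSpace ℝ (Fin m)} {S : Finset (Fin s)} (hcard : S.card = m)
    (hveq : {i | ⟪a i, v⟫ = b i} = (↑S : Set (Fin s)))
    (hdet : (Matrix.of fun p q : Fin m => a (S.orderIsoOfFin hcard p) q).det ≠ 0)
    (hv : v ∈ closure (arrFace a b φ₁) ∩ closure (arrFace a b φ₂)) :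
    Module.finrank ℝ
        (vectorSpan ℝ (closure (arrFace a b φ₁) ∩ closure (arrFace a b φ₂)))
      = m - (Finset.univ.filter fun i => φ₁ i ≠ φ₂ i).card
    ∧ (Finset.univ.filter fun i => φ₁ i ≠ φ₂ i).card ≤ m := by
  classical
  set σij := closure (arrFace a b φ₁) ∩ closure (arrFace a b φ₂) with hσdef
  have hPset : σij = Pset a b φ₁ ∩ Pset a b φ₂ := by
    rw [hσdef, closure_arrFace a b φ₁ hφ₁0 hφ₁ne, closure_arrFace a b φ₂ hφ₂0 hφ₂ne]
  set Df := Finset.univ.filter fun i => φ₁ i ≠ φ₂ i with hDf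
  have hv' := hv
  rw [hPset] at hv'
  have hvP₁ : v ∈ Pset a b φ₁ := hv'.1
  have hvP₂ : v ∈ Pset a b φ₂ := hv'.2
  have hDfzero : ∀ x, x ∈ Pset a b φ₁ → x ∈ Pset a b φ₂ → ∀ i ∈ Df, ⟪a i, x⟫ = b i := by
    intro x h1 h2 i hi
    rw [hDf, Finset.mem_filter] at hi
    have hopp := signCast_opp (hφ₁0 i) (hφ₂0 i) hi.2
    have g1 := h1 i
    have g2 := h2 i
    rw [hopp] at g2
    have hc := signCast_ne_zero (hφ₁0 i)
    have h0 : (φ₁ i : ℝ) * (⟪a i, x⟫ - b i) = 0 := le_antisymm (by linarith) g1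
    rcases mul_eq_zero.1 h0 with h | h
    · exact absurd h hc
    · linarith
  have hDfS : Df ⊆ S := by
    intro i hi
    have := hDfzero v hvP₁ hvP₂ i hi
    rw [← Finset.mem_coe, ← hveq]
    exact this
  set ι := S.orderIsoOfFin hcard with hι
  -- linear independence of the normals indexed by Df
  have hU : IsUnit (Matrix.of fun p q : Fin m => a (ι p) q) :=
    (Matrix.isUnit_iff_isUnit_det _).2 (isUnit_iff_ne_zero.2 hdet)
  have hrows := Matrix.linearIndependent_rows_iff_isUnit.2 hU
  have hrowsE : LinearIndependent ℝ (fun p : Fin m => a (ι p)) := by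
    have h2 := hrows.map' (WithLp.linearEquiv 2 ℝ (Fin m → ℝ)).symm.toLinearMap
      (LinearEquiv.ker _)
    exact h2
  have hsub : LinearIndependent ℝ (fun i : ↥Df => a ↑i) := by
    have hfinj : Function.Injective (fun i : ↥Df => ι.symm ⟨↑i, hDfS i.2⟩) := by
      intro i j hij
      have h3 := congrArg (fun p => ((ι p : Fin s))) hij
      simp only [OrderIso.apply_symm_apply] at h3
      exact Subtype.ext h3
    have h4 := hrowsE.comp _ hfinj
    have hfun : (fun i : ↥Df => a ↑i)
        = (fun p : Fin m => a (ι p)) ∘ (fun i : ↥Df => ι.symm ⟨↑i, hDfS i.2⟩) := by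
      funext i
      simp [Function.comp]
    rw [hfun]
    exact h4
  set K := Submodule.span ℝ (Set.range fun i : ↥Df => a ↑i) with hK
  have hKrank : Module.finrank ℝ K = Df.card := by
    rw [hK, finrank_span_eq_card hsub, Fintype.card_coe]
  set W := Kᗮ with hW
  have hWmem : ∀ u : EuclideanSpace ℝ (Fin m), u ∈ W ↔ ∀ i ∈ Df, ⟪a i, u⟫ = 0 := by
    intro u
    constructor
    · intro hu i hi
      exact (Submodule.mem_orthogonal K u).1 hu _ (Submodule.subset_span ⟨⟨i, hi⟩, rfl⟩)
    · intro h
      rw [Submodule.mem_orthogonal]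
      intro w hw
      refine Submodule.span_induction (p := fun x _ => ⟪x, u⟫ = 0) ?_ ?_ ?_ ?_ hw
      · rintro x ⟨i, rfl⟩
        exact h ↑i i.2
      · exact inner_zero_left u
      · intro x y _ _ hx hy
        rw [inner_add_left, hx, hy, add_zero]
      · intro c x _ hx
        rw [real_inner_smul_left, hx, mul_zero]
  have hWrank : Module.finrank ℝ W = m - Df.card := by
    have h1 := Submodule.finrank_add_finrank_orthogonal K
    rw [← hW] at h1
    rw [hKrank, finrank_euclideanSpace_fin] at h1
    omega
  have hDm : Df.card ≤ m := hcard ▸ Finset.card_le_card hDfS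
  -- upper bound
  have hup : vectorSpan ℝ σij ≤ W := by
    have : Submodule.span ℝ (σij -ᵥ σij) ≤ W := by
      apply Submodule.span_le.2
      rintro - ⟨x, hx, y, hy, rfl⟩
      rw [SetLike.mem_coe, hWmem]
      intro i hi
      rw [hPset] at hx hy
      have hx' := hDfzero x hx.1 hx.2 i hi
      have hy' := hDfzero y hy.1 hy.2 i hi
      show ⟪a i, x -ᵥ y⟫ = 0
      rw [vsub_eq_sub, inner_sub_right, hx', hy', sub_self]
    exact this
  -- lower bound
  have hvS : ∀ i ∈ S, ⟪a i, v⟫ = b i := by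
    intro i hi
    rw [← Finset.mem_coe, ← hveq] at hi
    exact hi
  set u0 : EuclideanSpace ℝ (Fin m) := toEuc
    ((Matrix.of fun p q : Fin m => a (ι p) q)⁻¹.mulVec
      fun p => if (ι p : Fin s) ∈ Df then 0 else (φ₁ (ι p) : ℝ)) with hu0def
  have hAu0 : ∀ p, ⟪a (ι p), u0⟫ = if (ι p : Fin s) ∈ Df then 0 else (φ₁ (ι p) : ℝ) := by
    intro p
    have h1 : (Matrix.of fun p q : Fin m => a (ι p) q).mulVec
        ((Matrix.of fun p q : Fin m => a (ι p) q)⁻¹.mulVec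
          fun p => if (ι p : Fin s) ∈ Df then 0 else (φ₁ (ι p) : ℝ))
        = fun p => if (ι p : Fin s) ∈ Df then 0 else (φ₁ (ι p) : ℝ) := by
      rw [Matrix.mulVec_mulVec, Matrix.mul_nonsing_inv _ (isUnit_iff_ne_zero.2 hdet),
        Matrix.one_mulVec]
    have h2 := congrFun h1 p
    simp only [Matrix.mulVec, dotProduct, Matrix.of_apply] at h2
    rw [inner_eq_sum]
    exact h2
  have hinners : ∀ i (hi : i ∈ S), ⟪a i, u0⟫ = if i ∈ Df then 0 else (φ₁ i : ℝ) := by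
    intro i hi
    have hip : ((ι (ι.symm ⟨i, hi⟩)) : Fin s) = i := by simp
    have h3 := hAu0 (ι.symm ⟨i, hi⟩)
    rw [hip] at h3
    exact h3
  set c₁ : Fin s → ℝ := fun i => (φ₁ i : ℝ) * (⟪a i, v⟫ - b i) with hc₁
  set c₂ : Fin s → ℝ := fun i => (φ₂ i : ℝ) * (⟪a i, v⟫ - b i) with hc₂
  have hne0 : ∀ i ∉ S, ⟪a i, v⟫ - b i ≠ 0 := by
    intro i hi h
    apply hi
    rw [← Finset.mem_coe, ← hveq]
    show ⟪a i, v⟫ = b i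
    linarith
  have hc₁pos : ∀ i ∉ S, 0 < c₁ i := fun i hi =>
    lt_of_le_of_ne (hvP₁ i) (Ne.symm (mul_ne_zero (signCast_ne_zero (hφ₁0 i)) (hne0 i hi)))
  have hc₂pos : ∀ i ∉ S, 0 < c₂ i := fun i hi =>
    lt_of_le_of_ne (hvP₂ i) (Ne.symm (mul_ne_zero (signCast_ne_zero (hφ₂0 i)) (hne0 i hi)))
  obtain ⟨ε, hε, hεlt⟩ := exists_pos_mul_lt'
    (c := fun i => if i ∈ S then 1 else min (c₁ i) (c₂ i) / 2)
    (by
      intro i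
      by_cases hi : i ∈ S
      · simp [hi]
      · simp only [if_neg hi]
        have := hc₁pos i hi
        have := hc₂pos i hi
        have := lt_min (hc₁pos i hi) (hc₂pos i hi)
        linarith)
    (fun i => |⟪a i, u0⟫|)
  obtain ⟨δ, hδ, hδlt⟩ := exists_pos_mul_lt'
    (c := fun i => if i ∈ S then (if i ∈ Df then 1 else ε) else min (c₁ i) (c₂ i) / 2)
    (by
      intro i
      by_cases hi : i ∈ S
      · by_cases hiD : i ∈ Df <;> simp [hi, hiD, hε]
      · simp only [if_neg hi]
        have := lt_min (hc₁pos i hi) (hc₂pos i hi)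
        linarith)
    (fun i => ‖a i‖)
  have hkey : ∀ φ : Fin s → SignType, (∀ i, φ i ≠ 0) → v ∈ Pset a b φ →
      (∀ i, i ∉ Df → φ i = φ₁ i) →
      (∀ i ∉ S, min (c₁ i) (c₂ i) ≤ (φ i : ℝ) * (⟪a i, v⟫ - b i)) →
      ∀ w : EuclideanSpace ℝ (Fin m), w ∈ W → ‖w‖ ≤ δ →
        v + ε • u0 + w ∈ Pset a b φ := by
    intro φ hφ0 hvP hφD hφmin w hw hwn i
    have hinn : ⟪a i, v + ε • u0 + w⟫ - b i
        = (⟪a i, v⟫ - b i) + ε * ⟪a i, u0⟫ + ⟪a i, w⟫ := by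
      rw [inner_add_right, inner_add_right, real_inner_smul_right]
      ring
    have hwb : |⟪a i, w⟫| ≤ ‖a i‖ * δ := by
      calc |⟪a i, w⟫| ≤ ‖a i‖ * ‖w‖ := abs_real_inner_le_norm _ _
        _ ≤ ‖a i‖ * δ := by nlinarith [norm_nonneg (a i)]
    have habs : |(φ i : ℝ)| = 1 := signCast_abs (hφ0 i)
    have h5 : -|⟪a i, w⟫| ≤ (φ i : ℝ) * ⟪a i, w⟫ := by
      have h6 := neg_abs_le ((φ i : ℝ) * ⟪a i, w⟫)
      rw [abs_mul, habs, one_mul] at h6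
      exact h6
    show 0 ≤ (φ i : ℝ) * (⟪a i, v + ε • u0 + w⟫ - b i)
    rw [hinn]
    by_cases hiS : i ∈ S
    · have h1 : ⟪a i, v⟫ - b i = 0 := by rw [hvS i hiS, sub_self]
      by_cases hiD : i ∈ Df
      · have h2 : ⟪a i, u0⟫ = 0 := by rw [hinners i hiS, if_pos hiD]
        have h3 : ⟪a i, w⟫ = 0 := (hWmem w).1 hw i hiD
        rw [h1, h2, h3]
        norm_num
      · have h2 : ⟪a i, u0⟫ = (φ₁ i : ℝ) := by rw [hinners i hiS, if_neg hiD]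
        have hδi := hδlt i
        simp only [if_pos hiS, if_neg hiD] at hδi
        have hsq : (φ i : ℝ) * (φ₁ i : ℝ) = 1 := by
          rw [hφD i hiD]
          exact signCast_sq (hφ₁0 i)
        rw [h1, h2]
        nlinarith [hwb, hδi, h5]
    · have hε1 := hεlt i
      simp only [if_neg hiS] at hε1
      have hδ1 := hδlt i
      simp only [if_neg hiS] at hδ1
      have hmin := hφmin i hiS
      have h6 : -(ε * |⟪a i, u0⟫|) ≤ (φ i : ℝ) * (ε * ⟪a i, u0⟫) := by
        have h7 := neg_abs_le ((φ i : ℝ) * (ε * ⟪a i, u0⟫))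
        rw [abs_mul, habs, one_mul, abs_mul, abs_of_pos hε] at h7
        exact h7
      have hexp : (φ i : ℝ) * ((⟪a i, v⟫ - b i) + ε * ⟪a i, u0⟫ + ⟪a i, w⟫)
          = (φ i : ℝ) * (⟪a i, v⟫ - b i) + (φ i : ℝ) * (ε * ⟪a i, u0⟫)
            + (φ i : ℝ) * ⟪a i, w⟫ := by ring
      rw [hexp]
      nlinarith [hmin, h5, h6, hwb, hε1, hδ1]
  have hmin₁ : ∀ i ∉ S, min (c₁ i) (c₂ i) ≤ (φ₁ i : ℝ) * (⟪a i, v⟫ - b i) :=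
    fun i _ => min_le_left _ _
  have hmin₂ : ∀ i ∉ S, min (c₁ i) (c₂ i) ≤ (φ₂ i : ℝ) * (⟪a i, v⟫ - b i) :=
    fun i _ => min_le_right _ _
  have hφ₂D : ∀ i, i ∉ Df → φ₂ i = φ₁ i := by
    intro i hi
    rw [hDf, Finset.mem_filter] at hi
    push_neg at hi
    exact (hi (Finset.mem_univ i)).symm
  have hk₁ := hkey φ₁ hφ₁0 hvP₁ (fun i _ => rfl) hmin₁
  have hk₂ := hkey φ₂ hφ₂0 hvP₂ hφ₂D hmin₂
  have hmemσ : ∀ w : EuclideanSpace ℝ (Fin m), w ∈ W → ‖w‖ ≤ δ →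
      v + ε • u0 + w ∈ σij := by
    intro w hw hwn
    rw [hPset]
    exact ⟨hk₁ w hw hwn, hk₂ w hw hwn⟩
  have hlow : W ≤ vectorSpan ℝ σij := by
    intro w hw
    rcases eq_or_ne w 0 with rfl | hw0
    · exact Submodule.zero_mem _
    · have hnw : 0 < ‖w‖ := norm_pos_iff.2 hw0
      have hw' : (δ / ‖w‖) • w ∈ W := Submodule.smul_mem _ _ hw
      have hn' : ‖(δ / ‖w‖) • w‖ ≤ δ := by
        rw [norm_smul, Real.norm_eq_abs, abs_of_pos (div_pos hδ hnw), div_mul_cancel₀ _ hnw.ne']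
      have h1 := hmemσ _ hw' hn'
      have h0 := hmemσ 0 (Submodule.zero_mem _) (by simpa using hδ.le)
      have hvs := vsub_mem_vectorSpan ℝ h1 h0
      have heq : (v + ε • u0 + (δ / ‖w‖) • w) -ᵥ (v + ε • u0 + 0) = (δ / ‖w‖) • w := by
        rw [vsub_eq_sub, add_zero]
        abel
      rw [heq] at hvs
      have hrepr : w = (‖w‖ / δ) • ((δ / ‖w‖) • w) := by
        rw [smul_smul]
        rw [div_mul_div_comm]
        rw [mul_comm ‖w‖ δ]
        rw [div_self (by positivity)]
        rw [one_smul]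
      rw [hrepr]
      exact Submodule.smul_mem _ _ hvs
  have hspan : vectorSpan ℝ σij = W := le_antisymm hup hlow
  rw [hspan]
  exact ⟨hWrank, hDm⟩

end AuxLemmas

/-- For top-dimensional bounded regions `F_i, F_j` of a generic affine
arrangement in `ℝ^m`, with `σ_{ij} = cl F_i ∩ cl F_j`, the inner product (in the
orthonormal-simplex inner product on `C_{m-1}(N; ℝ)`) of the nerve chains `Ψ(F_i)` and
`Ψ(F_j)` equals `(-1)^{m - dim σ_{ij}}` times the number of vertices of `σ_{ij}`. -/
theorem stmt_11 (s m : ℕ) (a : Fin s → EuclideanSpace ℝ (Fin m)) (b : Fin s → ℝ)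
    (ha : ∀ i, a i ≠ 0)
    (hgeneric : ∀ x : EuclideanSpace ℝ (Fin m),
      ({i | ⟪a i, x⟫ = b i} : Set (Fin s)).ncard ≤ m)
    (φ₁ φ₂ : Fin s → SignType)
    (hφ₁ : (∀ i, φ₁ i ≠ 0) ∧ (arrFace a b φ₁).Nonempty ∧
      Bornology.IsBounded (arrFace a b φ₁))
    (hφ₂ : (∀ i, φ₂ i ≠ 0) ∧ (arrFace a b φ₂).Nonempty ∧
      Bornology.IsBounded (arrFace a b φ₂))
    (σij : Set (EuclideanSpace ℝ (Fin m)))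
    (hσ : σij = closure (arrFace a b φ₁) ∩ closure (arrFace a b φ₂)) :
    ∑ S : Finset (Fin s), PsiChain a b φ₁ S * PsiChain a b φ₂ S =
      (-1 : ℝ) ^ (m - Module.finrank ℝ (affineSpan ℝ σij).direction) *
        ({x ∈ σij | ({i | ⟪a i, x⟫ = b i} : Set (Fin s)).ncard = m}.ncard : ℝ) := by
  classical
  obtain ⟨hφ₁0, hφ₁ne, hφ₁bd⟩ := hφ₁
  obtain ⟨hφ₂0, hφ₂ne, hφ₂bd⟩ := hφ₂
  set EF : EuclideanSpace ℝ (Fin m) → Finset (Fin s) :=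
    fun x => Finset.univ.filter fun i => ⟪a i, x⟫ = b i with hEF
  have hEFcoe : ∀ x, ((EF x : Set (Fin s))) = {i | ⟪a i, x⟫ = b i} := by
    intro x
    ext i
    simp [hEF]
  set V : Set (EuclideanSpace ℝ (Fin m)) :=
    {x ∈ σij | ({i | ⟪a i, x⟫ = b i} : Set (Fin s)).ncard = m} with hVdef
  have hσ₁ : σij ⊆ closure (arrFace a b φ₁) := by
    rw [hσ]; exact Set.inter_subset_left
  have hσ₂ : σij ⊆ closure (arrFace a b φ₂) := by
    rw [hσ]; exact Set.inter_subset_right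
  have hVcard : ∀ x ∈ V, (EF x).card = m := by
    intro x hx
    have h1 := hx.2
    rw [← hEFcoe x, Set.ncard_coe_finset] at h1
    exact h1
  have hVeq : ∀ x ∈ V, {i | ⟪a i, x⟫ = b i} = ((EF x : Set (Fin s))) :=
    fun x _ => (hEFcoe x).symm
  have hVdet : ∀ x (hx : x ∈ V),
      (Matrix.of fun p q : Fin m => a ((EF x).orderIsoOfFin (hVcard x hx) p) q).det ≠ 0 :=
    fun x hx => det_ne_zero_of_vertex a b φ₁ hφ₁bd hgeneric (hσ₁ hx.1)
      (hVcard x hx) (hVeq x hx)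
  have hinjV : Set.InjOn EF V := by
    intro x hx y hy hxy
    refine eq_of_eqset a b (hVcard x hx) (hVdet x hx) (hVeq x hx) ?_
    rw [hxy]
    exact hVeq y hy
  have hVfin : V.Finite := Set.Finite.of_finite_image (Set.toFinite _) hinjV
  set Vf := hVfin.toFinset with hVf
  set 𝒮 := Vf.image EF with h𝒮
  set Df := Finset.univ.filter fun i => φ₁ i ≠ φ₂ i with hDf
  -- the value of the product on simplices coming from vertices
  have hval : ∀ S ∈ 𝒮, PsiChain a b φ₁ S * PsiChain a b φ₂ S = (-1 : ℝ) ^ Df.card := by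
    intro S hS
    obtain ⟨x, hxVf, rfl⟩ := Finset.mem_image.1 hS
    have hxV : x ∈ V := (hVfin.mem_toFinset).1 hxVf
    have hcard := hVcard x hxV
    have hdet := hVdet x hxV
    have hxσ := hxV.1
    have hex₁ : ∃ z ∈ closure (arrFace a b φ₁),
        {i | ⟪a i, z⟫ = b i} = ((EF x : Set (Fin s))) := ⟨x, hσ₁ hxσ, hVeq x hxV⟩
    have hex₂ : ∃ z ∈ closure (arrFace a b φ₂),
        {i | ⟪a i, z⟫ = b i} = ((EF x : Set (Fin s))) := ⟨x, hσ₂ hxσ, hVeq x hxV⟩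
    simp only [PsiChain]
    rw [dif_pos hcard, dif_pos hcard, if_pos hex₁, if_pos hex₂]
    have hsmul₁ : (Matrix.of fun p q : Fin m =>
        ((φ₁ ((EF x).orderIsoOfFin hcard p) : ℝ) • a ((EF x).orderIsoOfFin hcard p)) q)
        = Matrix.of fun p q : Fin m => (φ₁ ((EF x).orderIsoOfFin hcard p) : ℝ) *
          (Matrix.of fun p q : Fin m => a ((EF x).orderIsoOfFin hcard p) q) p q := by
      ext p q
      simp
    have hsmul₂ : (Matrix.of fun p q : Fin m =>
        ((φ₂ ((EF x).orderIsoOfFin hcard p) : ℝ) • a ((EF x).orderIsoOfFin hcard p)) q)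
        = Matrix.of fun p q : Fin m => (φ₂ ((EF x).orderIsoOfFin hcard p) : ℝ) *
          (Matrix.of fun p q : Fin m => a ((EF x).orderIsoOfFin hcard p) q) p q := by
      ext p q
      simp
    rw [hsmul₁, hsmul₂, Matrix.det_mul_column, Matrix.det_mul_column]
    set d := (Matrix.of fun p q : Fin m => a ((EF x).orderIsoOfFin hcard p) q).det with hd
    -- x lies in both polyhedra
    have hxP₁ : x ∈ Pset a b φ₁ := by
      rw [← closure_arrFace a b φ₁ hφ₁0 hφ₁ne]
      exact hσ₁ hxσ
    have hxP₂ : x ∈ Pset a b φ₂ := by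
      rw [← closure_arrFace a b φ₂ hφ₂0 hφ₂ne]
      exact hσ₂ hxσ
    have hDfsub : Df ⊆ EF x := by
      intro i hi
      rw [hDf, Finset.mem_filter] at hi
      have hopp := signCast_opp (hφ₁0 i) (hφ₂0 i) hi.2
      have g1 := hxP₁ i
      have g2 := hxP₂ i
      rw [hopp] at g2
      have hc := signCast_ne_zero (hφ₁0 i)
      have h0 : (φ₁ i : ℝ) * (⟪a i, x⟫ - b i) = 0 := le_antisymm (by linarith) g1
      have heq : ⟪a i, x⟫ = b i := by
        rcases mul_eq_zero.1 h0 with h | h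
        · exact absurd h hc
        · linarith
      rw [hEF]
      exact Finset.mem_filter.2 ⟨Finset.mem_univ i, heq⟩
    have hprodφ : (∏ p : Fin m, (φ₁ ((EF x).orderIsoOfFin hcard p) : ℝ))
        * (∏ p : Fin m, (φ₂ ((EF x).orderIsoOfFin hcard p) : ℝ)) = (-1 : ℝ) ^ Df.card := by
      rw [← Finset.prod_mul_distrib]
      have h1 : ∀ p : Fin m, (φ₁ ((EF x).orderIsoOfFin hcard p) : ℝ)
          * (φ₂ ((EF x).orderIsoOfFin hcard p) : ℝ)
          = if φ₁ ((EF x).orderIsoOfFin hcard p) ≠ φ₂ ((EF x).orderIsoOfFin hcard p)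
            then -1 else 1 :=
        fun p => signType_cast_mul _ _ (hφ₁0 _) (hφ₂0 _)
      rw [Finset.prod_congr rfl fun p _ => h1 p]
      have h2 : (∏ p : Fin m, if φ₁ ((EF x).orderIsoOfFin hcard p)
            ≠ φ₂ ((EF x).orderIsoOfFin hcard p) then (-1 : ℝ) else 1)
          = ∏ i ∈ EF x, (if φ₁ i ≠ φ₂ i then (-1 : ℝ) else 1) := by
        rw [← Finset.prod_coe_sort (EF x)]
        exact Fintype.prod_equiv ((EF x).orderIsoOfFin hcard).toEquiv _ _ fun p => rfl
      rw [h2, Finset.prod_ite, Finset.prod_const, Finset.prod_const, one_pow, mul_one]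
      congr 1
      have hfilter : (EF x).filter (fun i => φ₁ i ≠ φ₂ i) = Df := by
        ext i
        simp only [Finset.mem_filter, hDf, Finset.mem_univ, true_and]
        refine ⟨fun h => h.2, fun h => ⟨?_, h⟩⟩
        have hmem : i ∈ Df := by
          rw [hDf]
          exact Finset.mem_filter.2 ⟨Finset.mem_univ i, h⟩
        exact hDfsub hmem
      rw [hfilter]
    have hd2 : (0 : ℝ) < d ^ 2 := pow_two_pos_of_ne_zero hdet
    exact signCast_mul_signCast (by linear_combination (d^2) * hprodφ) hd2
  have hzero : ∀ S : Finset (Fin s), S ∉ 𝒮 →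
      PsiChain a b φ₁ S * PsiChain a b φ₂ S = 0 := by
    intro S hS
    by_cases hcard : S.card = m
    · by_cases hex₁ : ∃ z ∈ closure (arrFace a b φ₁),
          {i | ⟪a i, z⟫ = b i} = (↑S : Set (Fin s))
      · by_cases hex₂ : ∃ z ∈ closure (arrFace a b φ₂),
            {i | ⟪a i, z⟫ = b i} = (↑S : Set (Fin s))
        · by_cases hdet : (Matrix.of fun p q : Fin m =>
              a (S.orderIsoOfFin hcard p) q).det = 0
          · have hz1 : PsiChain a b φ₁ S = 0 := by
              simp only [PsiChain]
              rw [dif_pos hcard, if_pos hex₁]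
              have hsmul₁ : (Matrix.of fun p q : Fin m =>
                  ((φ₁ (S.orderIsoOfFin hcard p) : ℝ) • a (S.orderIsoOfFin hcard p)) q)
                  = Matrix.of fun p q : Fin m => (φ₁ (S.orderIsoOfFin hcard p) : ℝ) *
                    (Matrix.of fun p q : Fin m => a (S.orderIsoOfFin hcard p) q) p q := by
                ext p q
                simp
              rw [hsmul₁, Matrix.det_mul_column, hdet, mul_zero]
              simp
            rw [hz1, zero_mul]
          · exfalso
            obtain ⟨x₁, hx₁cl, hx₁eq⟩ := hex₁
            obtain ⟨x₂, hx₂cl, hx₂eq⟩ := hex₂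
            have hx12 : x₁ = x₂ := eq_of_eqset a b hcard hdet hx₁eq hx₂eq
            have hxσ : x₁ ∈ σij := by
              rw [hσ]
              exact ⟨hx₁cl, hx12 ▸ hx₂cl⟩
            have hxV : x₁ ∈ V := ⟨hxσ, by rw [hx₁eq, Set.ncard_coe_finset, hcard]⟩
            apply hS
            rw [h𝒮]
            refine Finset.mem_image.2 ⟨x₁, hVfin.mem_toFinset.2 hxV, ?_⟩
            apply Finset.coe_injective
            rw [hEFcoe, hx₁eq]
        · simp only [PsiChain]
          rw [dif_pos hcard, dif_pos hcard, if_neg hex₂, mul_zero]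
      · simp only [PsiChain]
        rw [dif_pos hcard, if_neg hex₁, zero_mul]
    · simp only [PsiChain]
      rw [dif_neg hcard, zero_mul]
  have hinjVf : Set.InjOn EF ↑Vf := by
    rw [hVf, hVfin.coe_toFinset]
    exact hinjV
  have hsum : ∑ S : Finset (Fin s), PsiChain a b φ₁ S * PsiChain a b φ₂ S
      = (Vf.card : ℝ) * (-1 : ℝ) ^ Df.card := by
    rw [← Finset.sum_subset (Finset.subset_univ 𝒮) fun S _ hS => hzero S hS]
    rw [Finset.sum_congr rfl hval, Finset.sum_const, nsmul_eq_mul]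
    congr 2
    rw [h𝒮]
    exact Finset.card_image_of_injOn hinjVf
  have hVncard : V.ncard = Vf.card := by
    rw [← Set.ncard_coe_finset Vf, hVf, hVfin.coe_toFinset]
  rw [hsum, hVncard]
  rcases Nat.eq_zero_or_pos Vf.card with h0 | hpos
  · rw [h0]
    norm_num
  · obtain ⟨v, hvVf⟩ := Finset.card_pos.1 hpos
    have hvV : v ∈ V := hVfin.mem_toFinset.1 hvVf
    have hdim := dim_sigma a b φ₁ φ₂ hφ₁0 hφ₂0 hφ₁ne hφ₂ne (hVcard v hvV)
      (hVeq v hvV) (hVdet v hvV) (by rw [← hσ]; exact hvV.1)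
    rw [← hDf] at hdim
    have hdir : Module.finrank ℝ (affineSpan ℝ σij).direction = m - Df.card := by
      rw [direction_affineSpan, hσ]
      exact hdim.1
    rw [hdir]
    have h2 : m - (m - Df.card) = Df.card := by omega
    rw [h2]
    ring
end

section
/- In the arrangement of five lines in ℝ² consisting of two horizontal lines y = 1 and y = −1, the vertical line x = 0, and the two diagonal lines y = x and y = −x, with F_1, F_2, F_3, F_4 the four triangular bounded regions, the combinatorial pairing Φ(F_i,F_j) = (−1)^{dim(cl F_i ∩ cl F_j)}·|vertices(cl F_i ∩ cl F_j)| satisfies Φ(w, w) < 0 for w = F_1 + F_2 − F_3 − F_4; hence Φ is not positive definite for this non-generic arrangement. -/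
/-- The four closed triangular bounded regions of the arrangement of the five lines
`y = 1`, `y = -1`, `x = 0`, `y = x`, `y = -x` in `ℝ²`:
`T 0, T 1` above the `x`-axis (left and right of `x = 0`), `T 2, T 3` below. -/
def nongenericTriangles : Fin 4 → Set (ℝ × ℝ)
  | 0 => {p | p.1 ≤ 0 ∧ p.2 ≤ 1 ∧ -p.1 ≤ p.2}
  | 1 => {p | 0 ≤ p.1 ∧ p.2 ≤ 1 ∧ p.1 ≤ p.2}
  | 2 => {p | p.1 ≤ 0 ∧ -1 ≤ p.2 ∧ p.2 ≤ p.1}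
  | 3 => {p | 0 ≤ p.1 ∧ -1 ≤ p.2 ∧ p.2 ≤ -p.1}

/-- The vertices of the arrangement: the origin (on the three lines `x = 0`, `y = x`,
`y = -x`) and the six further pairwise intersection points on the lines `y = ±1`. -/
def nongenericVertices : Set (ℝ × ℝ) :=
  {(0, 0), (0, 1), (-1, 1), (1, 1), (0, -1), (-1, -1), (1, -1)}

/-- The combinatorial pairing `Φ(F_i, F_j) = (-1)^{dim (cl F_i ∩ cl F_j)} ⋅
|vertices(cl F_i ∩ cl F_j)|` for this arrangement. -/
noncomputable def nongenericPhi (i j : Fin 4) : ℤ :=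
  (-1 : ℤ) ^ (Module.finrank ℝ
      (affineSpan ℝ (nongenericTriangles i ∩ nongenericTriangles j)).direction) *
    ((nongenericVertices ∩ nongenericTriangles i ∩ nongenericTriangles j).ncard : ℤ)

/-- If a set in `ℝ²` contains `(0,0)`, `(0,b)` and `(a,b)` with `a b ≠ 0`, the direction
of its affine span is two-dimensional. -/
lemma nongeneric_rank2 {S : Set (ℝ × ℝ)} (a b : ℝ) (ha : a ≠ 0) (hb : b ≠ 0)
    (h0 : ((0:ℝ), (0:ℝ)) ∈ S) (h1 : ((0:ℝ), b) ∈ S) (h2 : (a, b) ∈ S) :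
    Module.finrank ℝ (affineSpan ℝ S).direction = 2 := by
  rw [direction_affineSpan]
  have hv1 : ((0:ℝ), b) ∈ vectorSpan ℝ S := by
    have := vsub_mem_vectorSpan ℝ h1 h0
    simpa using this
  have hv2 : ((a:ℝ), b) ∈ vectorSpan ℝ S := by
    have := vsub_mem_vectorSpan ℝ h2 h0
    simpa using this
  have htop : vectorSpan ℝ S = ⊤ := by
    rw [eq_top_iff]
    rintro ⟨x, y⟩ -
    have hxy : (x, y) = (y/b - x/a) • ((0:ℝ), b) + (x/a) • (a, b) := by
      simp only [Prod.smul_mk, smul_eq_mul, Prod.mk_add_mk, Prod.mk.injEq]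
      constructor
      · field_simp; ring
      · field_simp; ring
    rw [hxy]
    exact Submodule.add_mem _ (Submodule.smul_mem _ _ hv1) (Submodule.smul_mem _ _ hv2)
  rw [htop, finrank_top]
  simp [Module.finrank_prod]

/-- If a set in the line `x = 0` contains `(0,0)` and `(0,b)` with `b ≠ 0`, the direction
of its affine span is one-dimensional. -/
lemma nongeneric_rank1 {S : Set (ℝ × ℝ)} (b : ℝ) (hb : b ≠ 0)
    (hsub : ∀ p ∈ S, p.1 = 0)
    (h0 : ((0:ℝ),(0:ℝ)) ∈ S) (h1 : ((0:ℝ), b) ∈ S) :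
    Module.finrank ℝ (affineSpan ℝ S).direction = 1 := by
  rw [direction_affineSpan]
  have heq : vectorSpan ℝ S = Submodule.span ℝ {((0:ℝ),(1:ℝ))} := by
    apply le_antisymm
    · rw [vectorSpan_def, Submodule.span_le]
      rintro v ⟨p, hp, q, hq, rfl⟩
      rw [SetLike.mem_coe, Submodule.mem_span_singleton]
      refine ⟨p.2 - q.2, ?_⟩
      have e1 := hsub p hp; have e2 := hsub q hq
      simp [Prod.ext_iff, e1, e2]
    · rw [Submodule.span_le]
      rintro v hv
      simp only [Set.mem_singleton_iff] at hv
      subst hv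
      have h : ((0:ℝ),(1:ℝ)) = b⁻¹ • (((0:ℝ), b) -ᵥ ((0:ℝ),(0:ℝ))) := by
        simp [Prod.ext_iff, hb]
      rw [h]
      exact Submodule.smul_mem _ _ (vsub_mem_vectorSpan ℝ h1 h0)
  rw [heq]
  exact finrank_span_singleton (by simp [Prod.ext_iff])

lemma nongeneric_rank0 (p : ℝ × ℝ) :
    Module.finrank ℝ (affineSpan ℝ ({p} : Set (ℝ × ℝ))).direction = 0 := by
  rw [direction_affineSpan, vectorSpan_singleton]
  exact finrank_bot ℝ _

lemma nongeneric_cross02 :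
    nongenericTriangles 0 ∩ nongenericTriangles 2 = {((0:ℝ),(0:ℝ))} := by
  ext ⟨x,y⟩
  simp only [nongenericTriangles, Set.mem_inter_iff, Set.mem_setOf_eq,
    Set.mem_singleton_iff, Prod.mk.injEq]
  constructor
  · rintro ⟨⟨hx,-,hxy⟩,⟨-,-,hyx⟩⟩; constructor <;> linarith
  · rintro ⟨rfl,rfl⟩; norm_num

lemma nongeneric_cross03 :
    nongenericTriangles 0 ∩ nongenericTriangles 3 = {((0:ℝ),(0:ℝ))} := by
  ext ⟨x,y⟩
  simp only [nongenericTriangles, Set.mem_inter_iff, Set.mem_setOf_eq,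
    Set.mem_singleton_iff, Prod.mk.injEq]
  constructor
  · rintro ⟨⟨hx,-,hxy⟩,⟨hx2,-,hyx⟩⟩; constructor <;> linarith
  · rintro ⟨rfl,rfl⟩; norm_num

lemma nongeneric_cross12 :
    nongenericTriangles 1 ∩ nongenericTriangles 2 = {((0:ℝ),(0:ℝ))} := by
  ext ⟨x,y⟩
  simp only [nongenericTriangles, Set.mem_inter_iff, Set.mem_setOf_eq,
    Set.mem_singleton_iff, Prod.mk.injEq]
  constructor
  · rintro ⟨⟨hx,-,hxy⟩,⟨hx2,-,hyx⟩⟩; constructor <;> linarith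
  · rintro ⟨rfl,rfl⟩; norm_num

lemma nongeneric_cross13 :
    nongenericTriangles 1 ∩ nongenericTriangles 3 = {((0:ℝ),(0:ℝ))} := by
  ext ⟨x,y⟩
  simp only [nongenericTriangles, Set.mem_inter_iff, Set.mem_setOf_eq,
    Set.mem_singleton_iff, Prod.mk.injEq]
  constructor
  · rintro ⟨⟨hx,-,hxy⟩,⟨hx2,-,hyx⟩⟩; constructor <;> linarith
  · rintro ⟨rfl,rfl⟩; norm_num

lemma nongeneric_vert00 :
    nongenericVertices ∩ nongenericTriangles 0 ∩ nongenericTriangles 0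
    = {((0:ℝ),(0:ℝ)), ((0:ℝ),(1:ℝ)), ((-1:ℝ),(1:ℝ))} := by
  ext ⟨x, y⟩
  simp only [nongenericVertices, nongenericTriangles, Set.mem_inter_iff,
    Set.mem_insert_iff, Set.mem_singleton_iff, Set.mem_setOf_eq, Prod.mk.injEq]
  constructor
  · rintro ⟨⟨h, ht⟩, -⟩
    rcases h with ⟨rfl,rfl⟩|⟨rfl,rfl⟩|⟨rfl,rfl⟩|⟨rfl,rfl⟩|⟨rfl,rfl⟩|⟨rfl,rfl⟩|⟨rfl,rfl⟩ <;>
      (revert ht; norm_num)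
  · rintro (⟨rfl,rfl⟩|⟨rfl,rfl⟩|⟨rfl,rfl⟩) <;> norm_num

lemma nongeneric_vert11 :
    nongenericVertices ∩ nongenericTriangles 1 ∩ nongenericTriangles 1
    = {((0:ℝ),(0:ℝ)), ((0:ℝ),(1:ℝ)), ((1:ℝ),(1:ℝ))} := by
  ext ⟨x, y⟩
  simp only [nongenericVertices, nongenericTriangles, Set.mem_inter_iff,
    Set.mem_insert_iff, Set.mem_singleton_iff, Set.mem_setOf_eq, Prod.mk.injEq]
  constructor
  · rintro ⟨⟨h, ht⟩, -⟩
    rcases h with ⟨rfl,rfl⟩|⟨rfl,rfl⟩|⟨rfl,rfl⟩|⟨rfl,rfl⟩|⟨rfl,rfl⟩|⟨rfl,rfl⟩|⟨rfl,rfl⟩ <;>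
      (revert ht; norm_num)
  · rintro (⟨rfl,rfl⟩|⟨rfl,rfl⟩|⟨rfl,rfl⟩) <;> norm_num

lemma nongeneric_vert22 :
    nongenericVertices ∩ nongenericTriangles 2 ∩ nongenericTriangles 2
    = {((0:ℝ),(0:ℝ)), ((0:ℝ),(-1:ℝ)), ((-1:ℝ),(-1:ℝ))} := by
  ext ⟨x, y⟩
  simp only [nongenericVertices, nongenericTriangles, Set.mem_inter_iff,
    Set.mem_insert_iff, Set.mem_singleton_iff, Set.mem_setOf_eq, Prod.mk.injEq]
  constructor
  · rintro ⟨⟨h, ht⟩, -⟩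
    rcases h with ⟨rfl,rfl⟩|⟨rfl,rfl⟩|⟨rfl,rfl⟩|⟨rfl,rfl⟩|⟨rfl,rfl⟩|⟨rfl,rfl⟩|⟨rfl,rfl⟩ <;>
      (revert ht; norm_num)
  · rintro (⟨rfl,rfl⟩|⟨rfl,rfl⟩|⟨rfl,rfl⟩) <;> norm_num

lemma nongeneric_vert33 :
    nongenericVertices ∩ nongenericTriangles 3 ∩ nongenericTriangles 3
    = {((0:ℝ),(0:ℝ)), ((0:ℝ),(-1:ℝ)), ((1:ℝ),(-1:ℝ))} := by
  ext ⟨x, y⟩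
  simp only [nongenericVertices, nongenericTriangles, Set.mem_inter_iff,
    Set.mem_insert_iff, Set.mem_singleton_iff, Set.mem_setOf_eq, Prod.mk.injEq]
  constructor
  · rintro ⟨⟨h, ht⟩, -⟩
    rcases h with ⟨rfl,rfl⟩|⟨rfl,rfl⟩|⟨rfl,rfl⟩|⟨rfl,rfl⟩|⟨rfl,rfl⟩|⟨rfl,rfl⟩|⟨rfl,rfl⟩ <;>
      (revert ht; norm_num)
  · rintro (⟨rfl,rfl⟩|⟨rfl,rfl⟩|⟨rfl,rfl⟩) <;> norm_num

lemma nongeneric_vert01 :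
    nongenericVertices ∩ nongenericTriangles 0 ∩ nongenericTriangles 1
    = {((0:ℝ),(0:ℝ)), ((0:ℝ),(1:ℝ))} := by
  ext ⟨x, y⟩
  simp only [nongenericVertices, nongenericTriangles, Set.mem_inter_iff,
    Set.mem_insert_iff, Set.mem_singleton_iff, Set.mem_setOf_eq, Prod.mk.injEq]
  constructor
  · rintro ⟨⟨h, ht⟩, ht2⟩
    rcases h with ⟨rfl,rfl⟩|⟨rfl,rfl⟩|⟨rfl,rfl⟩|⟨rfl,rfl⟩|⟨rfl,rfl⟩|⟨rfl,rfl⟩|⟨rfl,rfl⟩ <;>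
      (revert ht ht2; norm_num)
  · rintro (⟨rfl,rfl⟩|⟨rfl,rfl⟩) <;> norm_num

lemma nongeneric_vert23 :
    nongenericVertices ∩ nongenericTriangles 2 ∩ nongenericTriangles 3
    = {((0:ℝ),(0:ℝ)), ((0:ℝ),(-1:ℝ))} := by
  ext ⟨x, y⟩
  simp only [nongenericVertices, nongenericTriangles, Set.mem_inter_iff,
    Set.mem_insert_iff, Set.mem_singleton_iff, Set.mem_setOf_eq, Prod.mk.injEq]
  constructor
  · rintro ⟨⟨h, ht⟩, ht2⟩
    rcases h with ⟨rfl,rfl⟩|⟨rfl,rfl⟩|⟨rfl,rfl⟩|⟨rfl,rfl⟩|⟨rfl,rfl⟩|⟨rfl,rfl⟩|⟨rfl,rfl⟩ <;>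
      (revert ht ht2; norm_num)
  · rintro (⟨rfl,rfl⟩|⟨rfl,rfl⟩) <;> norm_num

lemma nongeneric_ncard3 (a b c : ℝ × ℝ) (hab : a ≠ b) (hac : a ≠ c) (hbc : b ≠ c) :
    ({a, b, c} : Set (ℝ × ℝ)).ncard = 3 := by
  rw [Set.ncard_insert_of_notMem (by simp [hab, hac]) (Set.toFinite _),
    Set.ncard_pair hbc]

lemma nongenericPhi_symm (i j : Fin 4) : nongenericPhi i j = nongenericPhi j i := by
  unfold nongenericPhi
  rw [Set.inter_assoc, Set.inter_comm (nongenericTriangles i) (nongenericTriangles j),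
    ← Set.inter_assoc]

lemma nongenericPhi_00 : nongenericPhi 0 0 = 3 := by
  unfold nongenericPhi
  rw [Set.inter_self (nongenericTriangles 0), nongeneric_vert00,
    nongeneric_rank2 (-1) 1 (by norm_num) (by norm_num)
      (by show (0:ℝ) ≤ 0 ∧ (0:ℝ) ≤ 1 ∧ -(0:ℝ) ≤ 0; norm_num)
      (by show (0:ℝ) ≤ 0 ∧ (1:ℝ) ≤ 1 ∧ -(0:ℝ) ≤ 1; norm_num)
      (by show (-1:ℝ) ≤ 0 ∧ (1:ℝ) ≤ 1 ∧ -(-1:ℝ) ≤ 1; norm_num),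
    nongeneric_ncard3 _ _ _ (by norm_num [Prod.ext_iff]) (by norm_num [Prod.ext_iff])
      (by norm_num [Prod.ext_iff])]
  norm_num

lemma nongenericPhi_11 : nongenericPhi 1 1 = 3 := by
  unfold nongenericPhi
  rw [Set.inter_self (nongenericTriangles 1), nongeneric_vert11,
    nongeneric_rank2 1 1 (by norm_num) (by norm_num)
      (by show (0:ℝ) ≤ 0 ∧ (0:ℝ) ≤ 1 ∧ (0:ℝ) ≤ 0; norm_num)
      (by show (0:ℝ) ≤ 0 ∧ (1:ℝ) ≤ 1 ∧ (0:ℝ) ≤ 1; norm_num)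
      (by show (0:ℝ) ≤ 1 ∧ (1:ℝ) ≤ 1 ∧ (1:ℝ) ≤ 1; norm_num),
    nongeneric_ncard3 _ _ _ (by norm_num [Prod.ext_iff]) (by norm_num [Prod.ext_iff])
      (by norm_num [Prod.ext_iff])]
  norm_num

lemma nongenericPhi_22 : nongenericPhi 2 2 = 3 := by
  unfold nongenericPhi
  rw [Set.inter_self (nongenericTriangles 2), nongeneric_vert22,
    nongeneric_rank2 (-1) (-1) (by norm_num) (by norm_num)
      (by show (0:ℝ) ≤ 0 ∧ (-1:ℝ) ≤ 0 ∧ (0:ℝ) ≤ 0; norm_num)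
      (by show (0:ℝ) ≤ 0 ∧ (-1:ℝ) ≤ -1 ∧ (-1:ℝ) ≤ 0; norm_num)
      (by show (-1:ℝ) ≤ 0 ∧ (-1:ℝ) ≤ -1 ∧ (-1:ℝ) ≤ -1; norm_num),
    nongeneric_ncard3 _ _ _ (by norm_num [Prod.ext_iff]) (by norm_num [Prod.ext_iff])
      (by norm_num [Prod.ext_iff])]
  norm_num

lemma nongenericPhi_33 : nongenericPhi 3 3 = 3 := by
  unfold nongenericPhi
  rw [Set.inter_self (nongenericTriangles 3), nongeneric_vert33,
    nongeneric_rank2 1 (-1) (by norm_num) (by norm_num)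
      (by show (0:ℝ) ≤ 0 ∧ (-1:ℝ) ≤ 0 ∧ (0:ℝ) ≤ -0; norm_num)
      (by show (0:ℝ) ≤ 0 ∧ (-1:ℝ) ≤ -1 ∧ (-1:ℝ) ≤ -0; norm_num)
      (by show (0:ℝ) ≤ 1 ∧ (-1:ℝ) ≤ -1 ∧ (-1:ℝ) ≤ -1; norm_num),
    nongeneric_ncard3 _ _ _ (by norm_num [Prod.ext_iff]) (by norm_num [Prod.ext_iff])
      (by norm_num [Prod.ext_iff])]
  norm_num

lemma nongenericPhi_01 : nongenericPhi 0 1 = -2 := by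
  unfold nongenericPhi
  rw [nongeneric_vert01,
    nongeneric_rank1 1 (by norm_num)
      (by rintro ⟨x, y⟩ ⟨⟨h1, -, -⟩, ⟨h2, -, -⟩⟩; exact le_antisymm h1 h2)
      (by constructor
          · show (0:ℝ) ≤ 0 ∧ (0:ℝ) ≤ 1 ∧ -(0:ℝ) ≤ 0; norm_num
          · show (0:ℝ) ≤ 0 ∧ (0:ℝ) ≤ 1 ∧ (0:ℝ) ≤ 0; norm_num)
      (by constructor
          · show (0:ℝ) ≤ 0 ∧ (1:ℝ) ≤ 1 ∧ -(0:ℝ) ≤ 1; norm_num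
          · show (0:ℝ) ≤ 0 ∧ (1:ℝ) ≤ 1 ∧ (0:ℝ) ≤ 1; norm_num),
    Set.ncard_pair (by norm_num [Prod.ext_iff])]
  norm_num

lemma nongenericPhi_23 : nongenericPhi 2 3 = -2 := by
  unfold nongenericPhi
  rw [nongeneric_vert23,
    nongeneric_rank1 (-1) (by norm_num)
      (by rintro ⟨x, y⟩ ⟨⟨h1, -, -⟩, ⟨h2, -, -⟩⟩; exact le_antisymm h1 h2)
      (by constructor
          · show (0:ℝ) ≤ 0 ∧ (-1:ℝ) ≤ 0 ∧ (0:ℝ) ≤ 0; norm_num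
          · show (0:ℝ) ≤ 0 ∧ (-1:ℝ) ≤ 0 ∧ (0:ℝ) ≤ -0; norm_num)
      (by constructor
          · show (0:ℝ) ≤ 0 ∧ (-1:ℝ) ≤ -1 ∧ (-1:ℝ) ≤ 0; norm_num
          · show (0:ℝ) ≤ 0 ∧ (-1:ℝ) ≤ -1 ∧ (-1:ℝ) ≤ -0; norm_num),
    Set.ncard_pair (by norm_num [Prod.ext_iff])]
  norm_num

lemma nongeneric_phi_of_cross {i j : Fin 4}
    (h : nongenericTriangles i ∩ nongenericTriangles j = {((0:ℝ),(0:ℝ))}) :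
    nongenericPhi i j = 1 := by
  unfold nongenericPhi
  rw [Set.inter_assoc, h, nongeneric_rank0,
    Set.inter_eq_self_of_subset_right
      (by simp [nongenericVertices] : ({((0:ℝ),(0:ℝ))} : Set (ℝ × ℝ)) ⊆ nongenericVertices)]
  simp

lemma nongenericPhi_02 : nongenericPhi 0 2 = 1 := nongeneric_phi_of_cross nongeneric_cross02
lemma nongenericPhi_03 : nongenericPhi 0 3 = 1 := nongeneric_phi_of_cross nongeneric_cross03
lemma nongenericPhi_12 : nongenericPhi 1 2 = 1 := nongeneric_phi_of_cross nongeneric_cross12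
lemma nongenericPhi_13 : nongenericPhi 1 3 = 1 := nongeneric_phi_of_cross nongeneric_cross13

/-- In the non-generic arrangement of the five lines `y = 1`, `y = -1`,
`x = 0`, `y = x`, `y = -x` in `ℝ²`, with `F_1, F_2, F_3, F_4` the four bounded triangles,
the combinatorial pairing `Φ` satisfies `Φ(w, w) < 0` for `w = F_1 + F_2 - F_3 - F_4`;
hence `Φ` is not positive definite (the definiteness result requires genericity). -/
theorem stmt_17 (w : Fin 4 → ℤ) (hw : w = ![1, 1, -1, -1]) :
    (∑ i : Fin 4, ∑ j : Fin 4, w i * w j * nongenericPhi i j) < 0 := by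
  subst hw
  have h10 : nongenericPhi 1 0 = -2 := (nongenericPhi_symm 1 0).trans nongenericPhi_01
  have h32 : nongenericPhi 3 2 = -2 := (nongenericPhi_symm 3 2).trans nongenericPhi_23
  have h20 : nongenericPhi 2 0 = 1 := (nongenericPhi_symm 2 0).trans nongenericPhi_02
  have h30 : nongenericPhi 3 0 = 1 := (nongenericPhi_symm 3 0).trans nongenericPhi_03
  have h21 : nongenericPhi 2 1 = 1 := (nongenericPhi_symm 2 1).trans nongenericPhi_12
  have h31 : nongenericPhi 3 1 = 1 := (nongenericPhi_symm 3 1).trans nongenericPhi_13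
  simp only [Fin.sum_univ_four, Matrix.cons_val_zero, Matrix.cons_val_one, Matrix.head_cons,
    Matrix.cons_val_two, Matrix.tail_cons, Matrix.cons_val_three,
    nongenericPhi_00, nongenericPhi_11, nongenericPhi_22, nongenericPhi_33,
    nongenericPhi_01, nongenericPhi_23, nongenericPhi_02, nongenericPhi_03,
    nongenericPhi_12, nongenericPhi_13, h10, h32, h20, h30, h21, h31]
  norm_num
end
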